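/- arXiv:1609.04910 — 4 statements merged into one kernel-verified Lean document; each statement's English description precedes it below -/
import Mathlib

section
/- Let Ψ be the set of functions u : ℕ → ℝ_{>0} with Σ_{n≥1} 1/u(n) < ∞. Let a, b > 1 be real numbers and ψ ∈ Ψ. Then there exists ω ∈ Ψ such that ω(⌊log_b n⌋) ≤ ψ(⌊log_a n⌋) for all n ≥ 2. -/
open Real

/-- For `a, b > 1` and `ψ` with summable reciprocals there exists `ω` with summable
reciprocals such that `ω ⌊log_b n⌋ ≤ ψ ⌊log_a n⌋` for all `n ≥ 2`. -/
theorem stmt_1 (a b : ℝ) (ha : 1 < a) (hb : 1 < b)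
    (ψ : ℕ → ℝ) (hψpos : ∀ n, 0 < ψ n) (hψ : Summable fun n => 1 / ψ n) :
    ∃ ω : ℕ → ℝ, (∀ n, 0 < ω n) ∧ (Summable fun n => 1 / ω n) ∧
      ∀ n : ℕ, 2 ≤ n → ω ⌊Real.logb b n⌋₊ ≤ ψ ⌊Real.logb a n⌋₊ := by
  have hla : 0 < Real.log a := Real.log_pos ha
  have hlb : 0 < Real.log b := Real.log_pos hb
  set r : ℝ := Real.log b / Real.log a with hrdef
  have hrpos : 0 < r := div_pos hlb hla
  set l : ℕ → ℕ := fun k => ⌊(k : ℝ) * r⌋₊ with hldef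
  set u : ℕ → ℕ := fun k => ⌊((k : ℝ) + 1) * r⌋₊ with hudef
  have hlu : ∀ k, l k ≤ u k := by
    intro k
    exact Nat.floor_le_floor (by nlinarith)
  have hne : ∀ k, (Finset.Icc (l k) (u k)).Nonempty := fun k => Finset.nonempty_Icc.2 (hlu k)
  set ω : ℕ → ℝ := fun k => (Finset.Icc (l k) (u k)).inf' (hne k) ψ with hωdef
  have hωpos : ∀ k, 0 < ω k := by
    intro k
    obtain ⟨m0, hm0, heq⟩ := Finset.exists_mem_eq_inf' (hne k) ψ
    rw [hωdef]
    simp only []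
    rw [heq]
    exact hψpos m0
  have hg : ∀ m : ℕ, 0 ≤ 1 / ψ m := fun m => le_of_lt (one_div_pos.mpr (hψpos m))
  -- the bounded-multiplicity constant
  set B : ℕ := ⌈1 / r⌉₊ + 2 with hBdef
  have hcard : ∀ N m : ℕ,
      ((Finset.range N).filter (fun k => l k ≤ m ∧ m ≤ u k)).card ≤ B := by
    intro N m
    have hsub : (Finset.range N).filter (fun k => l k ≤ m ∧ m ≤ u k) ⊆
        Finset.Icc (⌈(m : ℝ) / r⌉₊ - 1) ⌊((m : ℝ) + 1) / r⌋₊ := by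
      intro k hk
      simp only [Finset.mem_filter, Finset.mem_range] at hk
      obtain ⟨-, h1, h2⟩ := hk
      rw [Finset.mem_Icc]
      constructor
      · -- ⌈m/r⌉ ≤ k + 1
        have hkr : (m : ℝ) ≤ ((k : ℝ) + 1) * r := by
          calc (m : ℝ) ≤ (u k : ℕ) := by exact_mod_cast h2
            _ ≤ ((k : ℝ) + 1) * r := Nat.floor_le (mul_nonneg (by positivity) hrpos.le)
        have : ⌈(m : ℝ) / r⌉₊ ≤ k + 1 := by
          rw [Nat.ceil_le, div_le_iff₀ hrpos]
          push_cast
          linarith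
        omega
      · -- k ≤ ⌊(m+1)/r⌋
        have hkr : (k : ℝ) * r < (m : ℝ) + 1 := by
          have h1' : (⌊(k : ℝ) * r⌋₊ : ℝ) ≤ (m : ℝ) := by exact_mod_cast h1
          have := Nat.lt_floor_add_one ((k : ℝ) * r)
          linarith
        exact Nat.le_floor (by rw [le_div_iff₀ hrpos]; linarith)
    refine (Finset.card_le_card hsub).trans ?_
    rw [Nat.card_Icc]
    have hb' : ⌊((m : ℝ) + 1) / r⌋₊ ≤ ⌈(m : ℝ) / r⌉₊ + ⌈1 / r⌉₊ := by
      have hle : ((m : ℝ) + 1) / r ≤ ((⌈(m : ℝ) / r⌉₊ + ⌈1 / r⌉₊ : ℕ) : ℝ) := by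
        push_cast
        rw [add_div]
        exact add_le_add (Nat.le_ceil _) (Nat.le_ceil _)
      calc ⌊((m : ℝ) + 1) / r⌋₊ ≤ ⌊((⌈(m : ℝ) / r⌉₊ + ⌈1 / r⌉₊ : ℕ) : ℝ)⌋₊ :=
            Nat.floor_le_floor hle
        _ = _ := Nat.floor_natCast _
    omega
  -- summability of the interval sums
  have hkey : ∀ N : ℕ,
      ∑ k ∈ Finset.range N, ∑ m ∈ Finset.Icc (l k) (u k), 1 / ψ m
        ≤ (B : ℝ) * ∑' m, 1 / ψ m := by
    intro N
    set M : ℕ := u N + 1 with hMdef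
    have hsub2 : ∀ k ∈ Finset.range N, Finset.Icc (l k) (u k) ⊆ Finset.range M := by
      intro k hk m hm
      rw [Finset.mem_Icc] at hm
      rw [Finset.mem_range]
      have huk : u k ≤ u N := by
        apply Nat.floor_le_floor
        have hkN : (k : ℝ) ≤ (N : ℝ) := by
          exact_mod_cast (Finset.mem_range.mp hk).le
        nlinarith
      omega
    calc ∑ k ∈ Finset.range N, ∑ m ∈ Finset.Icc (l k) (u k), 1 / ψ m
        = ∑ k ∈ Finset.range N, ∑ m ∈ (Finset.range M).filter
            (fun m => l k ≤ m ∧ m ≤ u k), 1 / ψ m := by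
          refine Finset.sum_congr rfl fun k hk => ?_
          congr 1
          ext m
          simp only [Finset.mem_Icc, Finset.mem_filter, Finset.mem_range]
          constructor
          · intro h
            exact ⟨Finset.mem_range.mp (hsub2 k hk (Finset.mem_Icc.mpr h)), h⟩
          · exact fun h => h.2
      _ = ∑ k ∈ Finset.range N, ∑ m ∈ Finset.range M,
            if l k ≤ m ∧ m ≤ u k then 1 / ψ m else 0 := by
          refine Finset.sum_congr rfl fun k _ => ?_
          rw [Finset.sum_filter]
      _ = ∑ m ∈ Finset.range M, ∑ k ∈ Finset.range N,
            if l k ≤ m ∧ m ≤ u k then 1 / ψ m else 0 := Finset.sum_comm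
      _ = ∑ m ∈ Finset.range M,
            (((Finset.range N).filter (fun k => l k ≤ m ∧ m ≤ u k)).card : ℝ) * (1 / ψ m) := by
          refine Finset.sum_congr rfl fun m _ => ?_
          rw [← Finset.sum_filter, Finset.sum_const, nsmul_eq_mul]
      _ ≤ ∑ m ∈ Finset.range M, (B : ℝ) * (1 / ψ m) := by
          refine Finset.sum_le_sum fun m _ => ?_
          exact mul_le_mul_of_nonneg_right (by exact_mod_cast hcard N m) (hg m)
      _ = (B : ℝ) * ∑ m ∈ Finset.range M, 1 / ψ m := by rw [Finset.mul_sum]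
      _ ≤ (B : ℝ) * ∑' m, 1 / ψ m := by
          apply mul_le_mul_of_nonneg_left _ (by positivity)
          exact Summable.sum_le_tsum _ (fun m _ => hg m) hψ
  have hS : Summable fun k => ∑ m ∈ Finset.Icc (l k) (u k), 1 / ψ m := by
    apply summable_of_sum_range_le (c := (B : ℝ) * ∑' m, 1 / ψ m)
    · intro k
      exact Finset.sum_nonneg fun m _ => hg m
    · exact hkey
  have hωsum : Summable fun k => 1 / ω k := by
    apply hS.of_nonneg_of_le
    · intro k
      exact le_of_lt (one_div_pos.mpr (hωpos k))
    · intro k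
      obtain ⟨m0, hm0, heq⟩ := Finset.exists_mem_eq_inf' (hne k) ψ
      have : 1 / ω k = 1 / ψ m0 := by rw [hωdef]; simp only []; rw [heq]
      rw [this]
      exact Finset.single_le_sum (fun i _ => hg i) hm0
  refine ⟨ω, hωpos, hωsum, ?_⟩
  intro n hn
  have hn1 : (1 : ℝ) ≤ (n : ℝ) := by exact_mod_cast Nat.one_le_of_lt hn
  set k := ⌊Real.logb b n⌋₊ with hkdef
  have hbk : (k : ℝ) ≤ Real.logb b n := Nat.floor_le (Real.logb_nonneg hb hn1)
  have hbk2 : Real.logb b n < (k : ℝ) + 1 := Nat.lt_floor_add_one _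
  have hrel : Real.logb a n = Real.logb b n * r := by
    simp only [Real.logb, hrdef]
    field_simp
  rw [hωdef]
  simp only []
  apply Finset.inf'_le
  rw [Finset.mem_Icc]
  constructor
  · apply Nat.floor_le_floor
    rw [hrel]
    exact mul_le_mul_of_nonneg_right hbk hrpos.le
  · apply Nat.floor_le_floor
    rw [hrel]
    exact le_of_lt (mul_lt_mul_of_pos_right hbk2 hrpos)
end

section
/- Let X_1 be a non-negative random variable whose distribution function F satisfies F(x) = 1 - 1/log(x) for all sufficiently large x. Then for every n ∈ ℕ and every choice of b_n < n, the trimmed sum S_n^{b_n} (the sum of the n - b_n smallest among X_1,...,X_n i.i.d.) has infinite expectation: E(S_n^{b_n}) = ∞. -/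
open MeasureTheory ProbabilityTheory Real

/-- The trimmed sum: sum of all but the `b` largest of `x 0, …, x (n-1)`. -/
noncomputable def trimmedSum (n b : ℕ) (x : ℕ → ℝ) : ℝ :=
  (((List.ofFn fun i : Fin n => x i).insertionSort (· ≥ ·)).drop b).sum

lemma le_list_sum_of_forall {l : List ℝ} {t : ℝ} (hne : l ≠ [])
    (h : ∀ a ∈ l, t ≤ a) (h0 : ∀ a ∈ l, 0 ≤ a) : t ≤ l.sum := by
  cases l with
  | nil => exact absurd rfl hne
  | cons a tl =>
    have h1 : t ≤ a := h a (by simp)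
    have h2 : (0:ℝ) ≤ tl.sum := List.sum_nonneg fun b hb => h0 b (by simp [hb])
    simp only [List.sum_cons]
    linarith

lemma le_trimmedSum {n b : ℕ} (hb : b < n) {x : ℕ → ℝ} (hx : ∀ i, 0 ≤ x i)
    {t : ℝ} (h : ∀ i, i < n → t ≤ x i) : t ≤ trimmedSum n b x := by
  set l := ((List.ofFn fun i : Fin n => x i).insertionSort (· ≥ ·)) with hl
  have hlen : l.length = n := by
    simp [hl, List.length_insertionSort]
  have hmemx : ∀ a ∈ l.drop b, ∃ i : Fin n, x i = a := by
    intro a ha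
    have h1 : a ∈ l := List.mem_of_mem_drop ha
    have h2 : a ∈ (List.ofFn fun i : Fin n => x i) :=
      ((List.perm_insertionSort (· ≥ ·) _).mem_iff).mp h1
    simpa [List.mem_ofFn] using h2
  have hne : l.drop b ≠ [] := by
    intro hcon
    have : (l.drop b).length = l.length - b := List.length_drop
    rw [hcon, hlen] at this
    simp at this
    omega
  refine le_list_sum_of_forall hne ?_ ?_
  · intro a ha
    obtain ⟨i, hi⟩ := hmemx a ha
    exact hi ▸ h i i.2
  · intro a ha
    obtain ⟨i, hi⟩ := hmemx a ha
    exact hi ▸ hx i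

lemma measurable_finset_inf' {Ω : Type*} [MeasurableSpace Ω] {s : Finset ℕ}
    (hs : s.Nonempty) (X : ℕ → Ω → ℝ) (h : ∀ i, Measurable (X i)) :
    Measurable fun ω => s.inf' hs fun i => X i ω := by
  induction hs using Finset.Nonempty.cons_induction with
  | singleton a =>
    have e : (fun ω => ({a} : Finset ℕ).inf' (Finset.singleton_nonempty a) fun i => X i ω)
        = X a := funext fun ω => Finset.inf'_singleton (fun i => X i ω)
    rw [e]; exact h a
  | cons a s ha hs ih =>
    have e : (fun ω => (Finset.cons a s ha).inf' (Finset.cons_nonempty ha) fun i => X i ω)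
        = fun ω => (X a ω) ⊓ (s.inf' hs fun i => X i ω) :=
      funext fun ω => Finset.inf'_cons hs (fun i => X i ω)
    rw [e]; exact (h a).inf ih

/-- If `F(x) = 1 - 1/log x` for all large `x`, then every trimmed sum `S_n^{b_n}` with
`b_n < n` has infinite expectation. -/
theorem stmt_8
    {Ω : Type*} [MeasurableSpace Ω] (μ : Measure Ω) [IsProbabilityMeasure μ]
    (X : ℕ → Ω → ℝ) (hmeas : ∀ i, Measurable (X i))
    (hindep : iIndepFun X μ)
    (hident : ∀ i, IdentDistrib (X i) (X 0) μ μ)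
    (hnonneg : ∀ i ω, 0 ≤ X i ω)
    (x₀ : ℝ)
    (hF : ∀ x : ℝ, x₀ ≤ x → (μ {ω | X 0 ω ≤ x}).toReal = 1 - 1 / Real.log x) :
    ∀ n b : ℕ, b < n →
      ∫⁻ ω, ENNReal.ofReal (trimmedSum n b fun k => X k ω) ∂μ = ⊤ := by
  intro n b hb
  have hn : 0 < n := by omega
  have hrange : (Finset.range n).Nonempty := Finset.nonempty_range_iff.mpr (by omega)
  set m : Ω → ℝ := fun ω => (Finset.range n).inf' hrange fun i => X i ω with hm
  have hm_meas : Measurable m := measurable_finset_inf' hrange X hmeas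
  have hm_nonneg : ∀ ω, 0 ≤ m ω := by
    intro ω
    exact Finset.le_inf' hrange _ fun i _ => hnonneg i ω
  -- pointwise bound: m ≤ trimmedSum
  have hpt : ∀ ω, ENNReal.ofReal (m ω) ≤ ENNReal.ofReal (trimmedSum n b fun k => X k ω) := by
    intro ω
    apply ENNReal.ofReal_le_ofReal
    apply le_trimmedSum hb (fun i => hnonneg i ω)
    intro i hi
    exact Finset.inf'_le _ (Finset.mem_range.mpr hi)
  -- enough: lintegral of m is ⊤
  have hmono := lintegral_mono (μ := μ) hpt
  rw [eq_top_iff]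
  refine le_trans ?_ hmono
  rw [lintegral_eq_lintegral_meas_lt μ (Filter.Eventually.of_forall hm_nonneg)
    hm_meas.aemeasurable]
  -- choose threshold T
  obtain ⟨T₁, hT₁⟩ := (Filter.eventually_atTop).mp
    ((isLittleO_log_rpow_atTop (r := 1 / (2 * n)) (by positivity)).def one_pos)
  set T : ℝ := max (max x₀ (Real.exp 1)) (max T₁ 1) with hT
  have hT_pos : 0 < T := lt_of_lt_of_le one_pos (le_trans (le_max_right T₁ 1) (le_max_right _ _))
  have key : ∀ t : ℝ, T < t → ENNReal.ofReal (t ^ (-(1/2) : ℝ)) ≤ μ {a | t < m a} := by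
    intro t ht
    have htx₀ : x₀ ≤ t := le_trans (le_trans (le_max_left _ _) (le_max_left _ _)) ht.le
    have hte : Real.exp 1 ≤ t := le_trans (le_trans (le_max_right _ _) (le_max_left _ _)) ht.le
    have htT₁ : T₁ ≤ t := le_trans (le_trans (le_max_left _ _) (le_max_right _ _)) ht.le
    have ht1 : (1:ℝ) < t := lt_of_le_of_lt (le_trans (le_max_right T₁ 1) (le_max_right _ _)) ht
    have hlog1 : 1 ≤ Real.log t := by
      rw [← Real.log_exp 1]
      exact Real.log_le_log (Real.exp_pos 1) hte
    have hlogpos : 0 < Real.log t := lt_of_lt_of_le one_pos hlog1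
    -- the set equality
    have hset : {a | t < m a} = ⋂ i ∈ Finset.range n, X i ⁻¹' Set.Ioi t := by
      ext a
      simp only [Set.mem_setOf_eq, hm, Finset.lt_inf'_iff, Set.mem_iInter, Set.mem_preimage,
        Set.mem_Ioi]
    -- independence gives the product
    have hprod : μ {a | t < m a} = (μ (X 0 ⁻¹' Set.Ioi t)) ^ n := by
      rw [hset, hindep.meas_biInter (fun i _ => ⟨Set.Ioi t, measurableSet_Ioi, rfl⟩)]
      have : ∀ i ∈ Finset.range n, μ (X i ⁻¹' Set.Ioi t) = μ (X 0 ⁻¹' Set.Ioi t) := by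
        intro i _
        exact (hident i).measure_mem_eq measurableSet_Ioi
      rw [Finset.prod_congr rfl this, Finset.prod_const, Finset.card_range]
    -- compute the tail probability
    have htail : μ (X 0 ⁻¹' Set.Ioi t) = ENNReal.ofReal (1 / Real.log t) := by
      have hc : X 0 ⁻¹' Set.Ioi t = {ω | X 0 ω ≤ t}ᶜ := by
        ext ω; simp [Set.mem_preimage, not_le]
      have hms : MeasurableSet {ω | X 0 ω ≤ t} := (hmeas 0) measurableSet_Iic
      have hcompl : μ (X 0 ⁻¹' Set.Ioi t) = 1 - μ {ω | X 0 ω ≤ t} := by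
        rw [hc, prob_compl_eq_one_sub hms]
      have hfin : μ {ω | X 0 ω ≤ t} ≤ 1 := prob_le_one
      have htoReal : (μ (X 0 ⁻¹' Set.Ioi t)).toReal = 1 / Real.log t := by
        rw [hcompl, ENNReal.toReal_sub_of_le hfin ENNReal.one_ne_top, ENNReal.toReal_one,
          hF t htx₀]
        ring
      rw [← htoReal, ENNReal.ofReal_toReal (measure_ne_top μ _)]
    rw [hprod, htail, ← ENNReal.ofReal_pow (by positivity)]
    apply ENNReal.ofReal_le_ofReal
    -- (1/log t)^n ≥ t^(-1/2)
    have hb1 := hT₁ t htT₁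
    have htpos : (0:ℝ) < t := lt_trans one_pos ht1
    have hlog_le : Real.log t ≤ t ^ ((1:ℝ) / (2 * n)) := by
      have := hb1
      rw [Real.norm_eq_abs, Real.norm_eq_abs, one_mul] at this
      calc Real.log t ≤ |Real.log t| := le_abs_self _
        _ ≤ |t ^ ((1:ℝ) / (2 * n))| := this
        _ = t ^ ((1:ℝ) / (2 * n)) := abs_of_nonneg (Real.rpow_nonneg htpos.le _)
    have hpow_le : Real.log t ^ n ≤ t ^ ((1:ℝ)/2) := by
      calc Real.log t ^ n ≤ (t ^ ((1:ℝ) / (2 * n))) ^ n :=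
            pow_le_pow_left₀ hlogpos.le hlog_le n
        _ = t ^ (((1:ℝ) / (2 * n)) * n) := by
            rw [← Real.rpow_natCast (t ^ ((1:ℝ) / (2 * n))) n, ← Real.rpow_mul htpos.le]
        _ = t ^ ((1:ℝ)/2) := by
            congr 1
            have hn' : (n:ℝ) ≠ 0 := Nat.cast_ne_zero.mpr (by omega)
            field_simp
    have h2 : (0:ℝ) < Real.log t ^ n := pow_pos hlogpos n
    have h3 : (0:ℝ) < t ^ ((1:ℝ)/2) := Real.rpow_pos_of_pos htpos _
    have e2 : (1 / Real.log t) ^ n = ((Real.log t) ^ n)⁻¹ := by rw [one_div, inv_pow]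
    rw [e2, Real.rpow_neg htpos.le]
    exact inv_anti₀ h2 hpow_le
  -- conclude: integral over Ioi T of t^(-1/2) is ⊤
  have hsub : Set.Ioi T ⊆ Set.Ioi (0:ℝ) := fun x hx => lt_trans hT_pos hx
  have hge : ∫⁻ t in Set.Ioi T, ENNReal.ofReal (t ^ (-(1/2) : ℝ)) ≤
      ∫⁻ t in Set.Ioi (0:ℝ), μ {a | t < m a} := by
    refine le_trans ?_ (lintegral_mono_set hsub)
    refine lintegral_mono_ae ?_
    filter_upwards [self_mem_ae_restrict measurableSet_Ioi] with t ht
    exact key t ht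
  refine le_trans ?_ hge
  -- lintegral of t^(-1/2) over Ioi T is ⊤
  have hnotint : ¬ IntegrableOn (fun t : ℝ => t ^ (-(1/2) : ℝ)) (Set.Ioi T) := by
    rw [integrableOn_Ioi_rpow_iff hT_pos]
    norm_num
  have hmeas' : AEStronglyMeasurable (fun t : ℝ => t ^ (-(1/2) : ℝ))
      (MeasureTheory.volume.restrict (Set.Ioi T)) := by
    apply ContinuousOn.aestronglyMeasurable ?_ measurableSet_Ioi
    apply ContinuousOn.rpow_const continuousOn_id
    intro x hx
    exact Or.inl (ne_of_gt (lt_trans hT_pos hx))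
  have : ∫⁻ t in Set.Ioi T, ‖(fun t : ℝ => t ^ (-(1/2) : ℝ)) t‖₊ = ⊤ := by
    by_contra hcon
    apply hnotint
    refine ⟨hmeas', ?_⟩
    rw [HasFiniteIntegral]
    exact lt_top_iff_ne_top.mpr hcon
  rw [top_le_iff, ← this]
  refine setLIntegral_congr_fun measurableSet_Ioi ?_
  intro t ht
  show _ = ‖t ^ (-(1/2) : ℝ)‖ₑ
  rw [Real.enorm_eq_ofReal (Real.rpow_nonneg (lt_trans hT_pos ht).le _)]
end

section
/- Let B_1, ..., B_N be i.i.d. Bernoulli random variables with success probability q, and suppose (3/2)·q·N ≤ C for some C. Then P(max_{j ≤ N} |q·j - Σ_{k=1}^j B_k| ≥ C) ≤ 2·exp(-(3/4)·q·N). -/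
open MeasureTheory ProbabilityTheory Real



section Aux
variable {Ω : Type*} [MeasurableSpace Ω] (μ : Measure Ω) [IsProbabilityMeasure μ]
  {B : Ω → ℝ} {q : ℝ}

lemma bern_exp_eq (hB : ∀ ω, B ω = 0 ∨ B ω = 1) (c : ℝ) :
    (fun ω => Real.exp (c * B ω)) = fun ω => 1 + (Real.exp c - 1) * B ω := by
  funext ω; rcases hB ω with h | h <;> simp [h]

lemma bern_indicator (hB : ∀ ω, B ω = 0 ∨ B ω = 1) :
    B = Set.indicator {ω | B ω = 1} (fun _ => (1:ℝ)) := by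
  funext ω; rcases hB ω with h | h
  · rw [h, Set.indicator_of_notMem]; simp [Set.mem_setOf_eq, h]
  · rw [h, Set.indicator_of_mem]; exact h

lemma bern_integrable (hmeas : Measurable B) (hB : ∀ ω, B ω = 0 ∨ B ω = 1) :
    Integrable B μ := by
  rw [bern_indicator hB]
  exact (integrable_const (1:ℝ)).indicator (hmeas (measurableSet_singleton 1))

lemma bern_integral (hq0 : 0 ≤ q) (hmeas : Measurable B)
    (hB : ∀ ω, B ω = 0 ∨ B ω = 1) (hlaw : μ {ω | B ω = 1} = ENNReal.ofReal q) :
    ∫ ω, B ω ∂μ = q := by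
  conv_lhs => rw [bern_indicator hB]
  rw [integral_indicator_const (1:ℝ) (s := {ω | B ω = 1}) (hmeas (measurableSet_singleton 1)), measureReal_def, hlaw,
    ENNReal.toReal_ofReal hq0, smul_eq_mul, mul_one]

lemma bern_exp_integrable (hmeas : Measurable B) (hB : ∀ ω, B ω = 0 ∨ B ω = 1) (c : ℝ) :
    Integrable (fun ω => Real.exp (c * B ω)) μ := by
  rw [bern_exp_eq hB]
  exact (integrable_const 1).add ((bern_integrable μ hmeas hB).const_mul _)

lemma bern_mgf (hq0 : 0 ≤ q) (hmeas : Measurable B)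
    (hB : ∀ ω, B ω = 0 ∨ B ω = 1) (hlaw : μ {ω | B ω = 1} = ENNReal.ofReal q) (c : ℝ) :
    ∫ ω, Real.exp (c * B ω) ∂μ = 1 + q * (Real.exp c - 1) := by
  rw [bern_exp_eq hB,
    integral_add (integrable_const 1) ((bern_integrable μ hmeas hB).const_mul _),
    integral_const, integral_const_mul, bern_integral μ hq0 hmeas hB hlaw]
  simp [mul_comm]

end Aux

lemma bern_mgf_lb {q c : ℝ} (hq0 : 0 ≤ q) (hq1 : q ≤ 1) :
    Real.exp (q * c) ≤ 1 + q * (Real.exp c - 1) := by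
  have h := convexOn_exp.2 (Set.mem_univ (0:ℝ)) (Set.mem_univ c)
    (by linarith : (0:ℝ) ≤ 1 - q) hq0 (by ring)
  simp only [smul_eq_mul, mul_zero, zero_add, Real.exp_zero, mul_one] at h
  calc Real.exp (q * c) ≤ (1 - q) + q * Real.exp c := by
        convert h using 2
    _ = 1 + q * (Real.exp c - 1) := by ring

lemma bern_mgf_ub {q c : ℝ} : 1 + q * (Real.exp c - 1) ≤ Real.exp (q * (Real.exp c - 1)) := by
  have := Real.add_one_le_exp (q * (Real.exp c - 1)); linarith

set_option maxHeartbeats 1600000 in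
theorem one_sided
    {Ω : Type*} [MeasurableSpace Ω] (μ : Measure Ω) [IsProbabilityMeasure μ]
    (B : ℕ → Ω → ℝ) (hmeas : ∀ i, Measurable (B i))
    (hindep : iIndepFun B μ)
    (q : ℝ) (hq0 : 0 ≤ q) (hq1 : q ≤ 1)
    (hBernoulli : ∀ i ω, B i ω = 0 ∨ B i ω = 1)
    (hlaw : ∀ i, μ {ω | B i ω = 1} = ENNReal.ofReal q)
    (N : ℕ) (C : ℝ) (hC : 3 / 2 * q * N ≤ C) (r : ℝ) (hr : r = 1 ∨ r = -1) :
    μ {ω | ∃ j ≤ N, C ≤ r * ((∑ k ∈ Finset.range j, B k ω) - q * j)}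
      ≤ ENNReal.ofReal (Real.exp (-(3 / 4) * q * N)) := by
  classical
  set f : ℕ → Ω → ℝ := fun j ω => r * ((∑ k ∈ Finset.range j, B k ω) - q * j) with hf
  have hfm : ∀ j, Measurable (f j) := fun j =>
    ((Finset.measurable_sum (Finset.range j) fun k _ => hmeas k).sub
      measurable_const).const_mul r
  set A : ℕ → Set Ω := fun j => {ω | C ≤ f j ω ∧ ∀ i, i < j → f i ω < C} with hA
  have hAm : ∀ j, MeasurableSet (A j) := by
    intro j
    have h2 : A j = {ω | C ≤ f j ω} ∩ ⋂ i, ⋂ (_ : i < j), {ω | f i ω < C} := by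
      ext ω; simp [hA]
    rw [h2]
    exact (measurableSet_le measurable_const (hfm j)).inter
      (MeasurableSet.iInter fun i => MeasurableSet.iInter fun _ =>
        measurableSet_lt (hfm i) measurable_const)
  have hEv : {ω | ∃ j ≤ N, C ≤ f j ω} = ⋃ j ∈ Finset.range (N+1), A j := by
    ext ω
    simp only [Set.mem_setOf_eq, Set.mem_iUnion, Finset.mem_range, Nat.lt_succ_iff, hA]
    constructor
    · rintro ⟨j, hj, hCj⟩
      have hex : ∃ i, C ≤ f i ω := ⟨j, hCj⟩
      exact ⟨Nat.find hex, le_trans (Nat.find_min' hex hCj) hj, Nat.find_spec hex,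
        fun i hi => not_le.mp (Nat.find_min hex hi)⟩
    · rintro ⟨j, hj, h1, _⟩; exact ⟨j, hj, h1⟩
  have hdisj : (↑(Finset.range (N+1)) : Set ℕ).PairwiseDisjoint A := by
    intro a _ b _ hab
    refine Set.disjoint_left.mpr fun ω ha hb => ?_
    rcases lt_or_gt_of_ne hab with h | h
    · exact absurd ha.1 (not_le.mpr (hb.2 a h))
    · exact absurd hb.1 (not_le.mpr (ha.2 b h))
  -- integrability of exp of sums
  have hBint : ∀ (s : Finset ℕ) (c : ℝ),
      Integrable (fun ω => Real.exp (c * ∑ k ∈ s, B k ω)) μ := by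
    intro s c
    have := hindep.integrable_exp_mul_sum (t := c) hmeas
      (s := s) (fun i _ => bern_exp_integrable μ (hmeas i) (hBernoulli i) c)
    simpa using this
  have hmgf : ∀ (s : Finset ℕ) (c : ℝ),
      ∫ ω, Real.exp (c * ∑ k ∈ s, B k ω) ∂μ = (1 + q * (Real.exp c - 1)) ^ s.card := by
    intro s c
    have h1 : mgf (∑ i ∈ s, B i) μ c = ∏ i ∈ s, mgf (B i) μ c := hindep.mgf_sum hmeas s
    have h2 : ∀ i ∈ s, mgf (B i) μ c = 1 + q * (Real.exp c - 1) := fun i _ =>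
      bern_mgf μ hq0 (hmeas i) (hBernoulli i) (hlaw i) c
    rw [Finset.prod_congr rfl h2, Finset.prod_const] at h1
    rw [← h1, mgf]
    congr 1
    funext ω
    simp [Finset.sum_apply]
  set m : ℝ := 1 + q * (Real.exp r - 1) with hm
  have hm1 : Real.exp (q * r) ≤ m := bern_mgf_lb hq0 hq1
  have hm0 : 0 < m := lt_of_lt_of_le (Real.exp_pos _) hm1
  set g : Ω → ℝ := fun ω => Real.exp (f N ω) with hg
  have hg_eq : g = fun ω =>
      Real.exp (-(r * (q * N))) * Real.exp (r * ∑ k ∈ Finset.range N, B k ω) := by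
    funext ω
    simp only [hg, hf]
    rw [← Real.exp_add]
    congr 1
    ring
  have hgint : Integrable g μ := by rw [hg_eq]; exact (hBint (Finset.range N) r).const_mul _
  have hgnn : ∀ ω, 0 ≤ g ω := fun ω => (Real.exp_pos _).le
  set h : ℕ → Ω → ℝ := fun j ω =>
    Real.exp (r * ((∑ k ∈ Finset.Ico j N, B k ω) - q * ((N:ℝ) - j))) with hh
  have hh_eq : ∀ j, h j = fun ω => Real.exp (-(r * (q * ((N:ℝ) - j)))) *
      Real.exp (r * ∑ k ∈ Finset.Ico j N, B k ω) := by
    intro j; funext ω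
    simp only [hh]
    rw [← Real.exp_add]
    congr 1
    ring
  have hhm : ∀ j, Measurable (h j) := fun j =>
    (((Finset.measurable_sum _ fun k _ => hmeas k).sub measurable_const).const_mul r).exp
  have hhnn : ∀ j ω, 0 ≤ h j ω := fun j ω => (Real.exp_pos _).le
  have hhint_ge : ∀ j, j ≤ N → 1 ≤ ∫ ω, h j ω ∂μ := by
    intro j hj
    rw [hh_eq j, integral_const_mul, hmgf (Finset.Ico j N) r, Nat.card_Ico]
    have hcast : ((N - j : ℕ) : ℝ) = (N:ℝ) - j := by
      rw [Nat.cast_sub hj]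
    have key : Real.exp (-(r * (q * ((N:ℝ) - j)))) * Real.exp (q * r) ^ (N - j) = 1 := by
      rw [← Real.exp_nat_mul, ← Real.exp_add,
        show -(r * (q * ((N:ℝ) - j))) + ((N - j : ℕ) : ℝ) * (q * r) = 0 from by
          rw [hcast]; ring, Real.exp_zero]
    calc (1:ℝ) = Real.exp (-(r * (q * ((N:ℝ) - j)))) * Real.exp (q * r) ^ (N - j) := key.symm
      _ ≤ Real.exp (-(r * (q * ((N:ℝ) - j)))) * m ^ (N - j) :=
          mul_le_mul_of_nonneg_left (pow_le_pow_left₀ (Real.exp_pos _).le hm1 _)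
            (Real.exp_pos _).le
  have hindepAj : ∀ j, j ≤ N → IndepFun (Set.indicator (A j) (fun _ => (1:ℝ))) (h j) μ := by
    intro j hj
    have hdisjST : Disjoint (Finset.range j) (Finset.Ico j N) := by
      simp only [Finset.disjoint_left, Finset.mem_range, Finset.mem_Ico]
      omega
    have hbase := hindep.indepFun_finset (Finset.range j) (Finset.Ico j N) hdisjST hmeas
    set ps : ℕ → (↥(Finset.range j) → ℝ) → ℝ := fun i x =>
      ∑ k ∈ Finset.univ.filter (fun k : ↥(Finset.range j) => (k:ℕ) < i), x k with hps
    have hpsm : ∀ i, Measurable (ps i) := fun i =>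
      Finset.measurable_sum _ fun k _ => measurable_pi_apply k
    set Sset : Set (↥(Finset.range j) → ℝ) :=
      {x | C ≤ r * (ps j x - q * j) ∧ ∀ i, i < j → r * (ps i x - q * i) < C} with hS
    have hSm : MeasurableSet Sset := by
      have heq : Sset = {x | C ≤ r * (ps j x - q * j)} ∩
          ⋂ i, ⋂ (_ : i < j), {x | r * (ps i x - q * i) < C} := by ext x; simp [hS]
      rw [heq]
      exact (measurableSet_le measurable_const
          (((hpsm j).sub measurable_const).const_mul r)).inter
        (MeasurableSet.iInter fun i => MeasurableSet.iInter fun _ =>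
          measurableSet_lt (((hpsm i).sub measurable_const).const_mul r) measurable_const)
    set φ : (↥(Finset.range j) → ℝ) → ℝ := Sset.indicator (fun _ => 1) with hφ
    have hφm : Measurable φ := measurable_const.indicator hSm
    set ψ : (↥(Finset.Ico j N) → ℝ) → ℝ := fun x =>
      Real.exp (r * ((∑ i, x i) - q * ((N:ℝ) - j))) with hψ
    have hψm : Measurable ψ :=
      (((Finset.measurable_sum _ fun k _ => measurable_pi_apply k).sub
        measurable_const).const_mul r).exp
    have hcomp := hbase.comp hφm hψm
    have hsum : ∀ (i : ℕ), i ≤ j → ∀ ω,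
        ps i (fun k : ↥(Finset.range j) => B k ω)
          = ∑ k ∈ Finset.range i, B k ω := by
      intro i hi ω
      rw [hps]
      dsimp only
      rw [Finset.sum_filter,
        Finset.sum_coe_sort (Finset.range j) (fun k => if k < i then B k ω else 0),
        ← Finset.sum_filter]
      congr 1
      ext k
      simp only [Finset.mem_filter, Finset.mem_range]
      omega
    have hφcomp : (φ ∘ fun ω (k : ↥(Finset.range j)) => B k ω)
        = Set.indicator (A j) (fun _ => (1:ℝ)) := by
      funext ω
      have hmem : ((fun k : ↥(Finset.range j) => B k ω) ∈ Sset) ↔ ω ∈ A j := by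
        simp only [hS, Set.mem_setOf_eq, hA, hf]
        rw [hsum j le_rfl ω]
        constructor
        · rintro ⟨h1, h2⟩
          exact ⟨h1, fun i hi => by rw [← hsum i hi.le ω]; exact h2 i hi⟩
        · rintro ⟨h1, h2⟩
          exact ⟨h1, fun i hi => by rw [hsum i hi.le ω]; exact h2 i hi⟩
      by_cases hω : ω ∈ A j
      · simp only [Function.comp_apply, hφ, Set.indicator_of_mem (hmem.mpr hω),
          Set.indicator_of_mem hω]
      · simp only [Function.comp_apply, hφ,
          Set.indicator_of_notMem (fun hx => hω (hmem.mp hx)),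
          Set.indicator_of_notMem hω]
    have hψcomp : (ψ ∘ fun ω (k : ↥(Finset.Ico j N)) => B k ω) = h j := by
      funext ω
      simp only [Function.comp_apply, hψ, hh]
      rw [Finset.sum_coe_sort (Finset.Ico j N) (fun k => B k ω)]
    rwa [hφcomp, hψcomp] at hcomp
  have hind_int : ∀ j, ∫ ω, Set.indicator (A j) (fun _ => (1:ℝ)) ω ∂μ = (μ (A j)).toReal := by
    intro j
    rw [integral_indicator_const (1:ℝ) (hAm j), smul_eq_mul, mul_one, measureReal_def]
  have claimC : ∀ j, j ≤ N → Real.exp C * (μ (A j)).toReal ≤ ∫ ω in A j, g ω ∂μ := by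
    intro j hj
    have hmul := (hindepAj j hj).integral_mul_eq_mul_integral
      ((measurable_const.indicator (hAm j)).aestronglyMeasurable) ((hhm j).aestronglyMeasurable)
    have step1 : Real.exp C * (μ (A j)).toReal ≤
        Real.exp C * ∫ ω, (Set.indicator (A j) (fun _ => (1:ℝ)) * h j) ω ∂μ := by
      rw [hmul, hind_int j]
      have h1 := hhint_ge j hj
      have h2 : (0:ℝ) ≤ (μ (A j)).toReal := ENNReal.toReal_nonneg
      have h3 : (μ (A j)).toReal * 1 ≤ (μ (A j)).toReal * integral μ (h j) :=
        mul_le_mul_of_nonneg_left h1 h2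
      rw [mul_one] at h3
      exact mul_le_mul_of_nonneg_left h3 (Real.exp_pos C).le
    have step2 : ∫ ω, Real.exp C * ((Set.indicator (A j) (fun _ => (1:ℝ)) * h j) ω) ∂μ ≤
        ∫ ω in A j, g ω ∂μ := by
      rw [← integral_indicator (hAm j)]
      refine integral_mono_of_nonneg (ae_of_all _ fun ω => ?_) (hgint.indicator (hAm j))
        (ae_of_all _ fun ω => ?_)
      · exact mul_nonneg (Real.exp_pos C).le
          (mul_nonneg (Set.indicator_nonneg (fun _ _ => zero_le_one) ω) (hhnn j ω))
      · by_cases hω : ω ∈ A j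
        · have hdec : f N ω = f j ω
              + r * ((∑ k ∈ Finset.Ico j N, B k ω) - q * ((N:ℝ) - j)) := by
            simp only [hf]
            rw [← Finset.sum_range_add_sum_Ico (fun k => B k ω) hj]
            push_cast
            ring
          have hgval : g ω = Real.exp (f j ω) * h j ω := by
            simp only [hg, hh]
            rw [← Real.exp_add, hdec]
          simp only [Pi.mul_apply, Set.indicator_of_mem hω, one_mul, hgval]
          exact mul_le_mul_of_nonneg_right (Real.exp_le_exp.mpr hω.1) (hhnn j ω)
        · simp [Set.indicator_of_notMem hω]
    calc Real.exp C * (μ (A j)).toReal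
        ≤ Real.exp C * ∫ ω, (Set.indicator (A j) (fun _ => (1:ℝ)) * h j) ω ∂μ := step1
      _ = ∫ ω, Real.exp C * ((Set.indicator (A j) (fun _ => (1:ℝ)) * h j) ω) ∂μ :=
          (integral_const_mul _ _).symm
      _ ≤ ∫ ω in A j, g ω ∂μ := step2
  have hkey : Real.exp C * (μ {ω | ∃ j ≤ N, C ≤ f j ω}).toReal ≤
      Real.exp (q * N * (Real.exp r - 1 - r)) := by
    have hμ : (μ {ω | ∃ j ≤ N, C ≤ f j ω}).toReal
        = ∑ j ∈ Finset.range (N+1), (μ (A j)).toReal := by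
      rw [hEv, measure_biUnion_finset hdisj (fun j _ => hAm j),
        ENNReal.toReal_sum (fun j _ => measure_ne_top μ _)]
    rw [hμ, Finset.mul_sum]
    calc ∑ j ∈ Finset.range (N+1), Real.exp C * (μ (A j)).toReal
        ≤ ∑ j ∈ Finset.range (N+1), ∫ ω in A j, g ω ∂μ :=
          Finset.sum_le_sum fun j hj => claimC j (Nat.lt_succ_iff.mp (Finset.mem_range.mp hj))
      _ = ∫ ω in ⋃ j ∈ Finset.range (N+1), A j, g ω ∂μ :=
          (integral_biUnion_finset _ (fun j _ => hAm j) hdisj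
            (fun j _ => hgint.integrableOn)).symm
      _ ≤ ∫ ω, g ω ∂μ := setIntegral_le_integral hgint (ae_of_all _ hgnn)
      _ = Real.exp (-(r * (q * N))) * m ^ N := by
          rw [hg_eq, integral_const_mul, hmgf (Finset.range N) r, Finset.card_range, hm]
      _ ≤ Real.exp (-(r * (q * N))) * Real.exp (q * (Real.exp r - 1)) ^ N := by
          refine mul_le_mul_of_nonneg_left ?_ (Real.exp_pos _).le
          exact pow_le_pow_left₀ hm0.le bern_mgf_ub N
      _ = Real.exp (q * N * (Real.exp r - 1 - r)) := by
          rw [← Real.exp_nat_mul, ← Real.exp_add]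
          congr 1
          ring
  have hqN : (0:ℝ) ≤ q * N := mul_nonneg hq0 (Nat.cast_nonneg N)
  have hrb : Real.exp r - 1 - r ≤ 3/4 := by
    rcases hr with hrr | hrr <;> subst hrr
    · have := Real.exp_one_lt_d9
      norm_num at this ⊢
      linarith
    · have h1 : (4/3:ℝ) ≤ Real.exp 1 := by
        have := Real.exp_one_gt_d9
        norm_num at this
        linarith
      have h2 : Real.exp (-1:ℝ) ≤ 3/4 := by
        rw [Real.exp_neg]
        calc (Real.exp 1)⁻¹ ≤ ((4:ℝ)/3)⁻¹ := inv_anti₀ (by norm_num) h1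
          _ = 3/4 := by norm_num
      linarith
  have hfinal : (μ {ω | ∃ j ≤ N, C ≤ f j ω}).toReal ≤ Real.exp (-(3/4) * q * N) := by
    have h1 : (μ {ω | ∃ j ≤ N, C ≤ f j ω}).toReal
        ≤ Real.exp (q * N * (Real.exp r - 1 - r) - C) := by
      rw [Real.exp_sub, le_div_iff₀ (Real.exp_pos C)]
      linarith [hkey]
    refine h1.trans (Real.exp_le_exp.mpr ?_)
    have h2 : q * N * (Real.exp r - 1 - r) ≤ q * N * (3/4) :=
      mul_le_mul_of_nonneg_left hrb hqN
    linarith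
  calc μ {ω | ∃ j ≤ N, C ≤ f j ω}
      = ENNReal.ofReal (μ {ω | ∃ j ≤ N, C ≤ f j ω}).toReal :=
        (ENNReal.ofReal_toReal (measure_ne_top μ _)).symm
    _ ≤ ENNReal.ofReal (Real.exp (-(3/4) * q * N)) := ENNReal.ofReal_le_ofReal hfinal
/-- Maximal Bernstein bound for i.i.d. Bernoulli(q) variables: if `(3/2) q N ≤ C` then
`P(max_{j ≤ N} |q j − Σ_{k=1}^j B_k| ≥ C) ≤ 2 exp(−(3/4) q N)`. -/
theorem stmt_13
    {Ω : Type*} [MeasurableSpace Ω] (μ : Measure Ω) [IsProbabilityMeasure μ]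
    (B : ℕ → Ω → ℝ) (hmeas : ∀ i, Measurable (B i))
    (hindep : iIndepFun B μ)
    (q : ℝ) (hq0 : 0 ≤ q) (hq1 : q ≤ 1)
    (hBernoulli : ∀ i ω, B i ω = 0 ∨ B i ω = 1)
    (hlaw : ∀ i, μ {ω | B i ω = 1} = ENNReal.ofReal q)
    (N : ℕ) (C : ℝ) (hC : 3 / 2 * q * N ≤ C) :
    μ {ω | ∃ j ≤ N, C ≤ |q * j - ∑ k ∈ Finset.range j, B k ω|}
      ≤ ENNReal.ofReal (2 * Real.exp (-(3 / 4) * q * N)) := by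
  have h1 := one_sided μ B hmeas hindep q hq0 hq1 hBernoulli hlaw N C hC 1 (Or.inl rfl)
  have h2 := one_sided μ B hmeas hindep q hq0 hq1 hBernoulli hlaw N C hC (-1) (Or.inr rfl)
  have hsub : {ω | ∃ j ≤ N, C ≤ |q * j - ∑ k ∈ Finset.range j, B k ω|}
      ⊆ {ω | ∃ j ≤ N, C ≤ 1 * ((∑ k ∈ Finset.range j, B k ω) - q * j)}
        ∪ {ω | ∃ j ≤ N, C ≤ (-1) * ((∑ k ∈ Finset.range j, B k ω) - q * j)} := by
    intro ω hω
    obtain ⟨j, hj, habs⟩ := hω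
    rcases le_abs.mp habs with hcase | hcase
    · right; exact ⟨j, hj, by linarith⟩
    · left; exact ⟨j, hj, by linarith⟩
  calc μ {ω | ∃ j ≤ N, C ≤ |q * j - ∑ k ∈ Finset.range j, B k ω|}
      ≤ μ ({ω | ∃ j ≤ N, C ≤ 1 * ((∑ k ∈ Finset.range j, B k ω) - q * j)}
        ∪ {ω | ∃ j ≤ N, C ≤ (-1) * ((∑ k ∈ Finset.range j, B k ω) - q * j)}) :=
        measure_mono hsub
    _ ≤ μ {ω | ∃ j ≤ N, C ≤ 1 * ((∑ k ∈ Finset.range j, B k ω) - q * j)}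
        + μ {ω | ∃ j ≤ N, C ≤ (-1) * ((∑ k ∈ Finset.range j, B k ω) - q * j)} :=
        measure_union_le _ _
    _ ≤ ENNReal.ofReal (Real.exp (-(3 / 4) * q * N))
        + ENNReal.ofReal (Real.exp (-(3 / 4) * q * N)) := add_le_add h1 h2
    _ = ENNReal.ofReal (2 * Real.exp (-(3 / 4) * q * N)) := by
        rw [← ENNReal.ofReal_add (Real.exp_nonneg _) (Real.exp_nonneg _)]
        congr 1
        ring
end

section
/- On the product probability space Ω = ∏_{n=1}^∞ ([0,1], Borel, Lebesgue), define for a sequence (p_n) in [0,1] the indicator random variables A_{n,k} = 1_{{π_k ≤ p_n}} where π_k is the k-th coordinate projection. Fix 0 < ε < 1/4 and ψ : ℕ → ℝ_{>0} with Σ 1/ψ(n) < ∞, and set c(k,n) = 8·(max{k, log ψ(⌊log n⌋)})^{1/2+ε}·(log ψ(⌊log n⌋))^{1/2-ε}. Then P(|p_n·n − Σ_{k=1}^n A_{n,k}| ≥ c(p_n·n, n) infinitely often) = 0. -/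
set_option maxHeartbeats 1000000

open MeasureTheory ProbabilityTheory Filter Real

section AuxPure

variable {Ω : Type*} {U : ℕ → Ω → ℝ}

/-- counting function -/
noncomputable def st14S (U : ℕ → Ω → ℝ) (q : ℝ) (n : ℕ) (ω : Ω) : ℝ :=
  ∑ k ∈ Finset.range n, (if U k ω ≤ q then (1:ℝ) else 0)


lemma st14S_nonneg (q : ℝ) (n : ℕ) (ω : Ω) : 0 ≤ st14S U q n ω :=
  Finset.sum_nonneg fun k _ => by positivity

lemma st14S_le (q : ℝ) (n : ℕ) (ω : Ω) : st14S U q n ω ≤ n := by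
  have : st14S U q n ω ≤ ∑ k ∈ Finset.range n, (1:ℝ) :=
    Finset.sum_le_sum fun k _ => by split <;> norm_num
  simpa using this

lemma st14S_mono {q q' : ℝ} {n n' : ℕ} (hq : q ≤ q') (hn : n ≤ n') (ω : Ω) :
    st14S U q n ω ≤ st14S U q' n' ω := by
  refine le_trans (Finset.sum_le_sum fun k _ => ?_)
    (Finset.sum_le_sum_of_subset_of_nonneg (Finset.range_subset_range.2 hn)
      (fun k _ _ => by positivity))
  by_cases h : U k ω ≤ q
  · simp only [if_pos h, if_pos (h.trans hq)]; exact le_refl 1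
  · simp only [if_neg h]; split <;> norm_num

end AuxPure

section Aux

variable {Ω : Type*} [MeasurableSpace Ω] {μ : Measure Ω} [IsProbabilityMeasure μ]
variable {U : ℕ → Ω → ℝ}

lemma st14S_meas (hmeas : ∀ k, Measurable (U k)) (q : ℝ) (n : ℕ) :
    Measurable (st14S U q n) := by
  apply Finset.measurable_sum
  intro k _
  exact Measurable.ite (measurableSet_le (hmeas k) measurable_const)
    measurable_const measurable_const

lemma st14_cdf (hmeas : ∀ k, Measurable (U k))
    (hunif : ∀ k, μ.map (U k) = volume.restrict (Set.Icc (0 : ℝ) 1))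
    (k : ℕ) {q : ℝ} (hq0 : 0 ≤ q) (hq1 : q ≤ 1) :
    μ {ω | U k ω ≤ q} = ENNReal.ofReal q := by
  have h1 : μ {ω | U k ω ≤ q} = μ.map (U k) (Set.Iic q) := by
    rw [Measure.map_apply (hmeas k) measurableSet_Iic]; rfl
  rw [h1, hunif k, Measure.restrict_apply measurableSet_Iic]
  have h2 : Set.Iic q ∩ Set.Icc (0:ℝ) 1 = Set.Icc 0 q := by
    ext x
    simp only [Set.mem_inter_iff, Set.mem_Iic, Set.mem_Icc]
    constructor
    · rintro ⟨h, h0, h1⟩; exact ⟨h0, h⟩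
    · rintro ⟨h0, h⟩; exact ⟨h, h0, h.trans hq1⟩
  rw [h2, Real.volume_Icc, sub_zero]

lemma st14_mgf_one (hmeas : ∀ k, Measurable (U k))
    (hunif : ∀ k, μ.map (U k) = volume.restrict (Set.Icc (0 : ℝ) 1))
    (k : ℕ) {q : ℝ} (hq0 : 0 ≤ q) (hq1 : q ≤ 1) (l : ℝ) :
    mgf (fun ω => if U k ω ≤ q then (1:ℝ) else 0) μ l = 1 + q * (exp l - 1) := by
  have hset : MeasurableSet {ω | U k ω ≤ q} :=
    measurableSet_le (hmeas k) measurable_const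
  have heq : (fun ω => exp (l * (if U k ω ≤ q then (1:ℝ) else 0)))
      = fun ω => Set.indicator {ω | U k ω ≤ q} (fun _ => exp l - 1) ω + 1 := by
    ext ω
    by_cases h : U k ω ≤ q
    · simp [h, Set.indicator_of_mem, Set.mem_setOf_eq]
    · simp [h, Set.indicator_of_notMem, Set.mem_setOf_eq]
  rw [mgf, heq, integral_add ((integrable_const _).indicator hset) (integrable_const 1),
    integral_indicator_const _ hset, integral_const]
  simp [measureReal_def, st14_cdf hmeas hunif k hq0 hq1, ENNReal.toReal_ofReal hq0, smul_eq_mul]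
  ring

end Aux

section Chernoff

variable {Ω : Type*} [MeasurableSpace Ω] {μ : Measure Ω} [IsProbabilityMeasure μ]
variable {U : ℕ → Ω → ℝ}

lemma st14_exp_quad {x : ℝ} (hx : |x| ≤ 1) : exp x ≤ 1 + x + (3/4) * x^2 := by
  have h := Real.exp_bound hx (by norm_num : 0 < 2)
  have h2 : ∑ i ∈ Finset.range 2, x ^ i / i.factorial = 1 + x := by
    simp [Finset.sum_range_succ]
  rw [h2] at h
  have h3 : |x| ^ 2 = x ^ 2 := sq_abs x
  norm_num [Nat.factorial] at h
  have := abs_le.1 h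
  nlinarith [this.2]

lemma st14_int (hmeas : ∀ k, Measurable (U k)) (q : ℝ) (n : ℕ) (l : ℝ) :
    Integrable (fun ω => exp (l * st14S U q n ω)) μ := by
  refine Integrable.mono' (integrable_const (exp (|l| * n)))
    (((st14S_meas hmeas q n).const_mul l).exp.aestronglyMeasurable) (ae_of_all _ fun ω => ?_)
  rw [Real.norm_eq_abs, abs_exp]
  apply exp_le_exp.2
  calc l * st14S U q n ω ≤ |l * st14S U q n ω| := le_abs_self _
    _ = |l| * |st14S U q n ω| := abs_mul _ _
    _ = |l| * st14S U q n ω := by rw [abs_of_nonneg (st14S_nonneg q n ω)]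
    _ ≤ |l| * n := by
        exact mul_le_mul_of_nonneg_left (st14S_le q n ω) (abs_nonneg l)

lemma st14_mgf_le (hmeas : ∀ k, Measurable (U k))
    (hindep : iIndepFun U μ)
    (hunif : ∀ k, μ.map (U k) = volume.restrict (Set.Icc (0 : ℝ) 1))
    {q : ℝ} (hq0 : 0 ≤ q) (hq1 : q ≤ 1) (n : ℕ) (l : ℝ) :
    mgf (st14S U q n) μ l ≤ exp ((n : ℝ) * q * (exp l - 1)) := by
  have hX : ∀ k, Measurable (fun ω => if U k ω ≤ q then (1:ℝ) else 0) := fun k =>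
    Measurable.ite (measurableSet_le (hmeas k) measurable_const)
      measurable_const measurable_const
  have hind : iIndepFun
      (fun k ω => if U k ω ≤ q then (1:ℝ) else 0) μ := by
    have := hindep.comp (g := fun _ (x : ℝ) => if x ≤ q then (1:ℝ) else 0)
      (fun _ => Measurable.ite measurableSet_Iic measurable_const measurable_const)
    exact this
  have h1 : st14S U q n = ∑ k ∈ Finset.range n, (fun ω => if U k ω ≤ q then (1:ℝ) else 0) := by
    ext ω; simp [st14S]
  rw [h1, hind.mgf_sum hX]
  have h2 : ∀ k, mgf (fun ω => if U k ω ≤ q then (1:ℝ) else 0) μ l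
      = 1 + q * (exp l - 1) := fun k => st14_mgf_one hmeas hunif k hq0 hq1 l
  calc (∏ k ∈ Finset.range n, mgf (fun ω => if U k ω ≤ q then (1:ℝ) else 0) μ l)
      = (1 + q * (exp l - 1)) ^ n := by
        rw [Finset.prod_congr rfl fun k _ => h2 k, Finset.prod_const, Finset.card_range]
    _ ≤ (exp (q * (exp l - 1))) ^ n := by
        apply pow_le_pow_left₀ _ (by linarith [Real.add_one_le_exp (q * (exp l - 1))]) n
        nlinarith [Real.exp_pos l, (Real.exp_pos l).le]
    _ = exp ((n : ℝ) * q * (exp l - 1)) := by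
        rw [← Real.exp_nat_mul]; ring_nf

end Chernoff

section Tails

variable {Ω : Type*} [MeasurableSpace Ω] {μ : Measure Ω} [IsProbabilityMeasure μ]
variable {U : ℕ → Ω → ℝ}

lemma st14_upper (hmeas : ∀ k, Measurable (U k))
    (hindep : iIndepFun U μ)
    (hunif : ∀ k, μ.map (U k) = volume.restrict (Set.Icc (0 : ℝ) 1))
    {q : ℝ} (hq0 : 0 ≤ q) (hq1 : q ≤ 1) (n : ℕ) {θ l : ℝ} (hl0 : 0 ≤ l) (hl1 : l ≤ 1) :
    μ {ω | q * n + θ ≤ st14S U q n ω} ≤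
      ENNReal.ofReal (exp (-(l*θ) + (3/4) * (q*n) * l^2)) := by
  have key := measure_ge_le_exp_mul_mgf (μ := μ) (X := st14S U q n) (q*n+θ) hl0
    (st14_int hmeas q n l)
  have hmgf := st14_mgf_le hmeas hindep hunif hq0 hq1 n l
  have hquad : exp l - 1 - l ≤ (3/4) * l^2 := by
    have := st14_exp_quad (x := l) (abs_le.2 ⟨by linarith, hl1⟩)
    linarith
  have hqn : (0:ℝ) ≤ q * n := mul_nonneg hq0 (Nat.cast_nonneg n)
  have h2 : exp (-l * (q*n+θ)) * mgf (st14S U q n) μ l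
      ≤ exp (-(l*θ) + (3/4)*(q*n)*l^2) := by
    calc exp (-l * (q*n+θ)) * mgf (st14S U q n) μ l
        ≤ exp (-l*(q*n+θ)) * exp ((n:ℝ)*q*(exp l - 1)) :=
          mul_le_mul_of_nonneg_left hmgf (exp_pos _).le
      _ = exp (-(l*θ) + (q*n)*(exp l - 1 - l)) := by rw [← exp_add]; congr 1; ring
      _ ≤ _ := by
          apply exp_le_exp.2
          nlinarith [mul_le_mul_of_nonneg_left hquad hqn]
  have hfin : μ {ω | q*n+θ ≤ st14S U q n ω} ≠ ⊤ := measure_ne_top μ _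
  rw [← ENNReal.ofReal_toReal hfin]
  exact ENNReal.ofReal_le_ofReal (key.trans h2)

lemma st14_exp_quad_neg {x : ℝ} (h0 : 0 ≤ x) (h1 : x ≤ 1) :
    exp (-x) - 1 + x ≤ (3/4) * x^2 := by
  have := st14_exp_quad (x := -x) (by rw [abs_neg, abs_of_nonneg h0]; exact h1)
  nlinarith [this]

lemma st14_lower (hmeas : ∀ k, Measurable (U k))
    (hindep : iIndepFun U μ)
    (hunif : ∀ k, μ.map (U k) = volume.restrict (Set.Icc (0 : ℝ) 1))
    {q : ℝ} (hq0 : 0 ≤ q) (hq1 : q ≤ 1) (n : ℕ) {θ l : ℝ} (hl0 : 0 ≤ l) (hl1 : l ≤ 1) :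
    μ {ω | st14S U q n ω ≤ q * n - θ} ≤
      ENNReal.ofReal (exp (-(l*θ) + (3/4) * (q*n) * l^2)) := by
  have key := measure_le_le_exp_mul_mgf (μ := μ) (X := st14S U q n) (q*n-θ)
    (neg_nonpos.2 hl0) (st14_int hmeas q n (-l))
  have hmgf := st14_mgf_le hmeas hindep hunif hq0 hq1 n (-l)
  have hquad := st14_exp_quad_neg hl0 hl1
  have hqn : (0:ℝ) ≤ q * n := mul_nonneg hq0 (Nat.cast_nonneg n)
  have h2 : exp (-(-l) * (q*n-θ)) * mgf (st14S U q n) μ (-l)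
      ≤ exp (-(l*θ) + (3/4)*(q*n)*l^2) := by
    calc exp (-(-l) * (q*n-θ)) * mgf (st14S U q n) μ (-l)
        ≤ exp (l*(q*n-θ)) * exp ((n:ℝ)*q*(exp (-l) - 1)) := by
          rw [neg_neg]
          exact mul_le_mul_of_nonneg_left hmgf (exp_pos _).le
      _ = exp (-(l*θ) + (q*n)*(exp (-l) - 1 + l)) := by rw [← exp_add]; congr 1; ring
      _ ≤ _ := by
          apply exp_le_exp.2
          nlinarith [mul_le_mul_of_nonneg_left hquad hqn]
  have hfin : μ {ω | st14S U q n ω ≤ q*n - θ} ≠ ⊤ := measure_ne_top μ _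
  rw [← ENNReal.ofReal_toReal hfin]
  exact ENNReal.ofReal_le_ofReal (key.trans h2)

lemma st14_tails (hmeas : ∀ k, Measurable (U k))
    (hindep : iIndepFun U μ)
    (hunif : ∀ k, μ.map (U k) = volume.restrict (Set.Icc (0 : ℝ) 1))
    {q : ℝ} (hq0 : 0 ≤ q) (hq1 : q ≤ 1) (n : ℕ)
    {θ b : ℝ} (hθ : 0 < θ) (hb : q * n ≤ b) (hb0 : 0 < b) :
    μ {ω | θ ≤ |st14S U q n ω - q * n|} ≤
      ENNReal.ofReal (2 * exp (-(min (θ^2/(4*b)) ((3/4)*θ)))) := by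
  have hqn : (0:ℝ) ≤ q * n := mul_nonneg hq0 (Nat.cast_nonneg n)
  set G := exp (-(min (θ^2/(4*b)) ((3/4)*θ))) with hG
  have hsub : {ω | θ ≤ |st14S U q n ω - q*n|} ⊆
      {ω | q*n + θ ≤ st14S U q n ω} ∪ {ω | st14S U q n ω ≤ q*n - θ} := by
    intro ω hω
    have hω' : θ ≤ |st14S U q n ω - q*n| := hω
    rcases le_abs.1 hω' with h | h
    · left; simp only [Set.mem_setOf_eq]; linarith
    · right; simp only [Set.mem_setOf_eq]; linarith
  have hup : μ {ω | q*n + θ ≤ st14S U q n ω} ≤ ENNReal.ofReal G := by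
    by_cases hcase : θ ≤ 3*b
    · have hl0 : 0 ≤ θ/(3*b) := by positivity
      have hl1 : θ/(3*b) ≤ 1 := by rw [div_le_one (by linarith)]; linarith
      refine (st14_upper hmeas hindep hunif hq0 hq1 n hl0 hl1).trans
        (ENNReal.ofReal_le_ofReal (exp_le_exp.2 ?_))
      have h1 : (3/4) * (q*n) * (θ/(3*b))^2 ≤ (3/4) * b * (θ/(3*b))^2 := by
        apply mul_le_mul_of_nonneg_right _ (by positivity)
        linarith
      have h2 : -(θ/(3*b)*θ) + (3/4) * b * (θ/(3*b))^2 = -(θ^2/(4*b)) := by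
        field_simp; ring
      have h3 : min (θ^2/(4*b)) ((3/4)*θ) ≤ θ^2/(4*b) := min_le_left _ _
      linarith
    · push_neg at hcase
      refine (st14_upper hmeas hindep hunif hq0 hq1 n (l := 1) (by norm_num)
        (le_refl 1)).trans (ENNReal.ofReal_le_ofReal (exp_le_exp.2 ?_))
      have h3 : min (θ^2/(4*b)) ((3/4)*θ) ≤ (3/4)*θ := min_le_right _ _
      nlinarith
  have hlo : μ {ω | st14S U q n ω ≤ q*n - θ} ≤ ENNReal.ofReal G := by
    by_cases hcase : θ ≤ q*n
    · have hθb : θ ≤ b := hcase.trans hb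
      have hl0 : 0 ≤ θ/b := by positivity
      have hl1 : θ/b ≤ 1 := by rw [div_le_one hb0]; exact hθb
      refine (st14_lower hmeas hindep hunif hq0 hq1 n hl0 hl1).trans
        (ENNReal.ofReal_le_ofReal (exp_le_exp.2 ?_))
      have h1 : (3/4) * (q*n) * (θ/b)^2 ≤ (3/4) * b * (θ/b)^2 := by
        apply mul_le_mul_of_nonneg_right _ (by positivity)
        linarith
      have h2 : -(θ/b*θ) + (3/4) * b * (θ/b)^2 = -(θ^2/(4*b)) := by
        field_simp; ring
      have h3 : min (θ^2/(4*b)) ((3/4)*θ) ≤ θ^2/(4*b) := min_le_left _ _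
      linarith
    · push_neg at hcase
      have : {ω | st14S U q n ω ≤ q*n - θ} = ∅ := by
        ext ω
        simp only [Set.mem_setOf_eq, Set.mem_empty_iff_false, iff_false, not_le]
        have := st14S_nonneg (U := U) q n ω
        linarith
      rw [this]
      simp
  calc μ {ω | θ ≤ |st14S U q n ω - q*n|}
      ≤ μ ({ω | q*n + θ ≤ st14S U q n ω} ∪ {ω | st14S U q n ω ≤ q*n - θ}) :=
        measure_mono hsub
    _ ≤ μ {ω | q*n + θ ≤ st14S U q n ω} + μ {ω | st14S U q n ω ≤ q*n - θ} :=
        measure_union_le _ _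
    _ ≤ ENNReal.ofReal G + ENNReal.ofReal G := add_le_add hup hlo
    _ = ENNReal.ofReal (2 * G) := by
        rw [← ENNReal.ofReal_add (exp_pos _).le (exp_pos _).le]; congr 1; ring

end Tails

section Block

noncomputable def st14M (L : ℝ) (j : ℕ) : ℝ := max (j:ℝ) L
noncomputable def st14tau (ε L : ℝ) (j : ℕ) : ℝ := st14M L j ^ (1/2 + ε) * L ^ (1/2 - ε)
noncomputable def st14E (ε L : ℝ) (j : ℕ) : ℝ := st14M L j ^ (2*ε) * L ^ (1 - 2*ε)
noncomputable def st14Del (ε L : ℝ) (D j : ℕ) : ℕ :=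
  ⌊(D:ℝ) * st14tau ε L j / (5*((j:ℝ)+1))⌋₊ + 1
noncomputable def st14I (ε L : ℝ) (D j : ℕ) : ℕ := D / st14Del ε L D j + 1
noncomputable def st14node (ε L : ℝ) (D j i : ℕ) : ℕ := min (i * st14Del ε L D j) D

variable {ε L : ℝ}

lemma st14M_pos (hL : 0 < L) (j : ℕ) : 0 < st14M L j := lt_max_of_lt_right hL
lemma st14M_ge (j : ℕ) : L ≤ st14M L j := le_max_right _ _
lemma st14M_ge' (j : ℕ) : (j:ℝ) ≤ st14M L j := le_max_left _ _

lemma st14tau_pos (hL : 0 < L) (j : ℕ) : 0 < st14tau ε L j :=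
  mul_pos (rpow_pos_of_pos (st14M_pos hL j) _) (rpow_pos_of_pos hL _)

lemma st14E_pos (hL : 0 < L) (j : ℕ) : 0 < st14E ε L j :=
  mul_pos (rpow_pos_of_pos (st14M_pos hL j) _) (rpow_pos_of_pos hL _)

lemma st14_L_le_tau (hε : 0 < ε) (hε' : ε < 1/4) (hL : 1 ≤ L) (j : ℕ) :
    L ≤ st14tau ε L j := by
  have hL0 : (0:ℝ) < L := by linarith
  have h1 : L ^ (1/2 + ε) ≤ st14M L j ^ (1/2 + ε) :=
    rpow_le_rpow hL0.le (st14M_ge j) (by linarith)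
  calc L = L ^ ((1/2 + ε) + (1/2 - ε)) := by norm_num
    _ = L ^ (1/2 + ε) * L ^ (1/2 - ε) := rpow_add hL0 _ _
    _ ≤ st14tau ε L j := by
        apply mul_le_mul_of_nonneg_right h1 (rpow_pos_of_pos hL0 _).le

lemma st14_E_le_tau (hε : 0 < ε) (hε' : ε < 1/4) (hL : 1 ≤ L) (j : ℕ) :
    st14E ε L j ≤ st14tau ε L j := by
  have hL0 : (0:ℝ) < L := by linarith
  have hM0 := st14M_pos hL0 j
  have h1 : L ^ (1/2 - ε) ≤ st14M L j ^ (1/2 - ε) :=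
    rpow_le_rpow hL0.le (st14M_ge j) (by linarith)
  have e1 : st14E ε L j = st14M L j ^ (2*ε) * (L ^ (1/2 - ε) * L ^ (1/2 - ε)) := by
    rw [st14E, ← rpow_add hL0]; congr 2; ring
  have e2 : st14tau ε L j = st14M L j ^ (2*ε) * (st14M L j ^ (1/2 - ε) * L ^ (1/2 - ε)) := by
    rw [st14tau, ← mul_assoc, ← rpow_add hM0]; congr 2; ring
  rw [e1, e2]
  apply mul_le_mul_of_nonneg_left _ (rpow_pos_of_pos hM0 _).le
  apply mul_le_mul_of_nonneg_right h1 (rpow_pos_of_pos hL0 _).le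

lemma st14tau_mono (hε : 0 < ε) (hL : 0 < L) {j j' : ℕ} (h : j ≤ j') :
    st14tau ε L j ≤ st14tau ε L j' := by
  apply mul_le_mul_of_nonneg_right _ (rpow_pos_of_pos hL _).le
  apply rpow_le_rpow (st14M_pos hL j).le _ (by norm_num; linarith)
  exact max_le_max (by exact_mod_cast Nat.cast_le.2 h) le_rfl

end Block

section NodeBound

variable {Ω : Type*} [MeasurableSpace Ω] {μ : Measure Ω} [IsProbabilityMeasure μ]
variable {U : ℕ → Ω → ℝ} {ε L : ℝ}

def st14Bad (U : ℕ → Ω → ℝ) (ε L : ℝ) (D j i : ℕ) : Set Ω :=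
  {ω | (17/5) * st14tau ε L j ≤
    |st14S U ((j:ℝ)/(D:ℝ)) (st14node ε L D j i) ω
      - ((j:ℝ)/(D:ℝ)) * (st14node ε L D j i)|}

noncomputable def st14BadBlock (U : ℕ → Ω → ℝ) (ε L : ℝ) (D : ℕ) : Set Ω :=
  ⋃ j ∈ Finset.range (D+1), ⋃ i ∈ Finset.range (st14I ε L D j + 1), st14Bad U ε L D j i

lemma st14_min_ge (hε : 0 < ε) (hε' : ε < 1/4) (hL : 1 ≤ L) (j : ℕ) :
    2 * st14E ε L j ≤
      min (((17/5) * st14tau ε L j)^2 / (4 * st14M L j)) ((3/4) * ((17/5) * st14tau ε L j)) := by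
  have hL0 : (0:ℝ) < L := by linarith
  have hM0 := st14M_pos hL0 j
  have hE := st14E_pos (ε := ε) hL0 j
  have htau := st14tau_pos (ε := ε) hL0 j
  have hEtau := st14_E_le_tau hε hε' hL j
  refine le_min ?_ (by nlinarith)
  -- θ²/(4M) = (289/100) E
  have hsq : ((17/5) * st14tau ε L j)^2 = (289/25) * (st14E ε L j * st14M L j) := by
    have e1 : st14tau ε L j ^ 2 = st14E ε L j * st14M L j := by
      rw [st14tau, st14E, mul_pow, ← rpow_natCast (st14M L j ^ (1/2+ε)) 2,
        ← rpow_natCast (L ^ (1/2-ε)) 2, ← rpow_mul hM0.le, ← rpow_mul hL0.le]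
      push_cast
      rw [show (1/2 + ε) * 2 = 2*ε + 1 by ring, show (1/2 - ε) * 2 = 1 - 2*ε by ring,
        rpow_add hM0, rpow_one]
      ring
    nlinarith [e1]
  rw [hsq]
  have heq : (289/25) * (st14E ε L j * st14M L j) / (4 * st14M L j)
      = (289/100) * st14E ε L j := by
    field_simp
    ring
  rw [heq]
  nlinarith

lemma st14_bad_le (hmeas : ∀ k, Measurable (U k))
    (hindep : iIndepFun U μ)
    (hunif : ∀ k, μ.map (U k) = volume.restrict (Set.Icc (0 : ℝ) 1))
    (hε : 0 < ε) (hε' : ε < 1/4) (hL : 1 ≤ L)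
    {D j : ℕ} (hjD : j ≤ D) (hD : 1 ≤ D) (i : ℕ) :
    μ (st14Bad U ε L D j i) ≤ ENNReal.ofReal (2 * exp (-(2 * st14E ε L j))) := by
  have hL0 : (0:ℝ) < L := by linarith
  have hD0 : (0:ℝ) < (D:ℝ) := by exact_mod_cast hD
  have hq0 : (0:ℝ) ≤ (j:ℝ)/(D:ℝ) := by positivity
  have hq1 : (j:ℝ)/(D:ℝ) ≤ 1 := by
    rw [div_le_one hD0]; exact_mod_cast hjD
  have hb : ((j:ℝ)/(D:ℝ)) * (st14node ε L D j i : ℕ) ≤ st14M L j := by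
    calc ((j:ℝ)/(D:ℝ)) * ((st14node ε L D j i : ℕ) : ℝ)
        ≤ ((j:ℝ)/(D:ℝ)) * (D:ℝ) := by
          apply mul_le_mul_of_nonneg_left _ hq0
          exact_mod_cast Nat.cast_le.2 (min_le_right _ _)
      _ = (j:ℝ) := by field_simp
      _ ≤ st14M L j := st14M_ge' j
  have h := st14_tails (μ := μ) hmeas hindep hunif hq0 hq1 (st14node ε L D j i)
    (θ := (17/5) * st14tau ε L j) (b := st14M L j)
    (by nlinarith [st14tau_pos (ε := ε) hL0 j]) hb (st14M_pos hL0 j)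
  refine le_trans (le_of_eq ?_) (h.trans (ENNReal.ofReal_le_ofReal ?_))
  · rfl
  · have := st14_min_ge hε hε' hL j
    have h2 : 0 < (2:ℝ) := by norm_num
    apply mul_le_mul_of_nonneg_left _ (by norm_num : (0:ℝ) ≤ 2)
    apply exp_le_exp.2
    linarith

end NodeBound

section TermBound

variable {ε L : ℝ}

noncomputable def st14h (L : ℝ) (j : ℕ) : ℝ := if (j:ℝ) ≤ L then 1 else (L/(j:ℝ))^(3:ℕ)

lemma st14h_nonneg (hL : 0 < L) (j : ℕ) : 0 ≤ st14h L j := by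
  unfold st14h; split
  · norm_num
  · positivity

lemma st14_term_le (hε : 0 < ε) (hε' : ε < 1/4) (hL : 1000 ≤ L) (hεL : 1 ≤ ε*L)
    {D : ℕ} (hD : 1 ≤ D) (j : ℕ) :
    ((st14I ε L D j + 1 : ℕ) : ℝ) * (2 * exp (-(2 * st14E ε L j)))
      ≤ 24 * exp (-(2*L)) * st14h L j := by
  have hL0 : (0:ℝ) < L := by linarith
  have htau := st14tau_pos (ε := ε) hL0 j
  have hD0 : (0:ℝ) < (D:ℝ) := by exact_mod_cast hD
  set x := (D:ℝ) * st14tau ε L j / (5*((j:ℝ)+1)) with hxdef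
  have hx0 : 0 < x := by positivity
  have hΔ : x < ((st14Del ε L D j : ℕ) : ℝ) := by
    rw [st14Del]; push_cast; exact Nat.lt_floor_add_one x
  have hI : ((st14I ε L D j + 1 : ℕ) : ℝ) ≤ 5*((j:ℝ)+1)/st14tau ε L j + 2 := by
    rw [st14I]; push_cast
    have h1 : ((D / st14Del ε L D j : ℕ) : ℝ) ≤ (D:ℝ)/((st14Del ε L D j : ℕ):ℝ) :=
      Nat.cast_div_le
    have h2 : (D:ℝ)/((st14Del ε L D j : ℕ):ℝ) ≤ (D:ℝ)/x := by
      gcongr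
    have h3 : (D:ℝ)/x = 5*((j:ℝ)+1)/st14tau ε L j := by
      rw [hxdef, div_div_eq_mul_div, mul_div_mul_left _ _ (ne_of_gt hD0)]
    push_cast at h1
    linarith
  by_cases hcase : (j:ℝ) ≤ L
  · have hM : st14M L j = L := max_eq_right hcase
    have htauL : st14tau ε L j = L := by
      rw [st14tau, hM, ← rpow_add hL0]; norm_num
    have hEL : st14E ε L j = L := by
      rw [st14E, hM, ← rpow_add hL0]; norm_num
    rw [st14h, if_pos hcase, hEL, mul_one]
    have h5 : 5*((j:ℝ)+1)/L ≤ 10 := by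
      rw [div_le_iff₀ hL0]; nlinarith
    rw [htauL] at hI
    nlinarith [exp_pos (-(2*L)), (by positivity : (0:ℝ) ≤ ((st14I ε L D j + 1 : ℕ):ℝ))]
  · push_neg at hcase
    have hj0 : (0:ℝ) < (j:ℝ) := by linarith
    set r := (j:ℝ)/L with hrdef
    have hr1 : 1 < r := (one_lt_div hL0).2 hcase
    have hr0 : (0:ℝ) < r := by linarith
    have hjr : (j:ℝ) = r * L := by rw [hrdef]; field_simp
    have hM : st14M L j = (j:ℝ) := max_eq_left (le_of_lt hcase)
    have hE : st14E ε L j = r ^ (2*ε) * L := by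
      rw [st14E, hM, hjr, mul_rpow hr0.le hL0.le, mul_assoc, ← rpow_add hL0]
      norm_num
    have htr : st14tau ε L j = r ^ (1/2+ε) * L := by
      rw [st14tau, hM, hjr, mul_rpow hr0.le hL0.le, mul_assoc, ← rpow_add hL0]
      norm_num
    -- I + 1 ≤ 12 r
    have hIr : ((st14I ε L D j + 1 : ℕ) : ℝ) ≤ 12 * r := by
      have h6 : 5*((j:ℝ)+1)/st14tau ε L j ≤ 10*((j:ℝ))/st14tau ε L j :=
        (div_le_div_iff_of_pos_right htau).2 (by linarith)
      have h7 : 10*(j:ℝ)/st14tau ε L j = 10 * r ^ (1/2 - ε) := by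
        rw [htr, hjr]
        rw [show (1/2 - ε) = 1 - (1/2 + ε) by ring, rpow_sub hr0, rpow_one]
        field_simp
      have h8 : r ^ (1/2 - ε) ≤ r := by
        nth_rewrite 2 [show r = r ^ (1:ℝ) by rw [rpow_one]]
        exact rpow_le_rpow_of_exponent_le hr1.le (by linarith)
      have h9 : (2:ℝ) ≤ 2*r := by linarith
      linarith
    -- r^4 ≤ exp (2 (E - L))
    have hexp : r^(4:ℕ) ≤ exp (2*(st14E ε L j - L)) := by
      have h10 : r ^ (2*ε) = exp (log r * (2*ε)) := rpow_def_of_pos hr0 _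
      have h11 : log r * (2*ε) + 1 ≤ r ^ (2*ε) := by
        rw [h10]; exact add_one_le_exp _
      have hlogr : 0 ≤ log r := log_nonneg hr1.le
      have h12 : (4:ℝ)*log r ≤ 2*(st14E ε L j - L) := by
        rw [hE]
        nlinarith [mul_le_mul_of_nonneg_left h11 (by linarith : (0:ℝ) ≤ 2*L),
          mul_nonneg hlogr (by linarith : (0:ℝ) ≤ ε*L - 1)]
      have h13 : r^(4:ℕ) = exp (((4:ℕ):ℝ)*log r) := by
        rw [exp_nat_mul, exp_log hr0]
      rw [h13]
      apply exp_le_exp.2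
      push_cast
      exact h12
    have hLj : (L/(j:ℝ))^(3:ℕ) = 1/r^(3:ℕ) := by
      rw [hjr]
      rw [show L/(r*L) = 1/r by field_simp]
      rw [one_div_pow]
    rw [st14h, if_neg (not_le.2 hcase), hLj]
    have hkey : r^(4:ℕ) * exp (-(2 * st14E ε L j)) ≤ exp (-(2*L)) := by
      calc r^(4:ℕ) * exp (-(2 * st14E ε L j))
          ≤ exp (2*(st14E ε L j - L)) * exp (-(2 * st14E ε L j)) :=
            mul_le_mul_of_nonneg_right hexp (exp_pos _).le
        _ = exp (-(2*L)) := by rw [← exp_add]; congr 1; ring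
    rw [mul_one_div, le_div_iff₀ (by positivity : (0:ℝ) < r^(3:ℕ))]
    calc ((st14I ε L D j + 1 : ℕ) : ℝ) * (2 * exp (-(2 * st14E ε L j))) * r^(3:ℕ)
        ≤ (12*r) * (2 * exp (-(2 * st14E ε L j))) * r^(3:ℕ) := by
          apply mul_le_mul_of_nonneg_right _ (by positivity)
          apply mul_le_mul_of_nonneg_right hIr (by positivity)
      _ = 24 * (r^(4:ℕ) * exp (-(2 * st14E ε L j))) := by ring
      _ ≤ 24 * exp (-(2*L)) := by linarith [hkey]

end TermBound

section SumBound

variable {ε L : ℝ}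

lemma st14_cube_step {a : ℝ} (ha : 1 ≤ a) :
    1/(a+1)^3 ≤ 1/(2*a^2) - 1/(2*(a+1)^2) := by
  have h0 : (0:ℝ) < a := by linarith
  have h1 : (0:ℝ) < a+1 := by linarith
  rw [div_sub_div _ _ (by positivity) (by positivity),
    div_le_div_iff₀ (by positivity) (by positivity)]
  nlinarith [pow_pos h0 2, pow_pos h1 2, sq_nonneg a, mul_pos h0 h1]

lemma st14_tail_sum {L : ℝ} (hL0 : 0 < L) {K : ℕ} (hK2 : 2 ≤ K) (N : ℕ) :
    ∑ i ∈ Finset.range N, (L/((K+i : ℕ):ℝ))^(3:ℕ)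
      ≤ L^3 * (1/(2*((K-1 : ℕ):ℝ)^2)) := by
  set F : ℕ → ℝ := fun i => 1/(2*((K-1+i : ℕ):ℝ)^2) with hF
  have hterm : ∀ i ∈ Finset.range N, (L/((K+i : ℕ):ℝ))^(3:ℕ) ≤ L^3 * (F i - F (i+1)) := by
    intro i _
    have ha1 : (1:ℝ) ≤ ((K-1+i : ℕ):ℝ) := by exact_mod_cast (by omega : 1 ≤ K-1+i)
    have hji : ((K+i:ℕ):ℝ) = ((K-1+i:ℕ):ℝ) + 1 := by
      have : K + i = (K-1+i) + 1 := by omega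
      rw [this]; push_cast; ring
    have hji2 : ((K-1+(i+1):ℕ):ℝ) = ((K-1+i:ℕ):ℝ) + 1 := by
      have : K-1+(i+1) = (K-1+i) + 1 := by omega
      rw [this]; push_cast; ring
    have hstep := st14_cube_step ha1
    have hFi : F i = 1/(2*((K-1+i : ℕ):ℝ)^2) := rfl
    have hFi1 : F (i+1) = 1/(2*(((K-1+i : ℕ):ℝ)+1)^2) := by
      rw [hF]; simp only []; rw [hji2]
    rw [hFi, hFi1, hji, div_pow]
    have hb : (0:ℝ) < (((K-1+i : ℕ):ℝ)+1)^3 := by positivity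
    calc L^3 / (((K-1+i : ℕ):ℝ)+1)^3 = L^3 * (1/(((K-1+i : ℕ):ℝ)+1)^3) := by ring
      _ ≤ L^3 * (1/(2*((K-1+i : ℕ):ℝ)^2) - 1/(2*(((K-1+i : ℕ):ℝ)+1)^2)) :=
          mul_le_mul_of_nonneg_left hstep (by positivity)
  calc ∑ i ∈ Finset.range N, (L/((K+i : ℕ):ℝ))^(3:ℕ)
      ≤ ∑ i ∈ Finset.range N, L^3 * (F i - F (i+1)) := Finset.sum_le_sum hterm
    _ = L^3 * (F 0 - F N) := by rw [← Finset.mul_sum, Finset.sum_range_sub' F]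
    _ ≤ L^3 * F 0 := by
        have h0 : 0 ≤ F N := by rw [hF]; positivity
        nlinarith [pow_pos hL0 3]
    _ = L^3 * (1/(2*((K-1 : ℕ):ℝ)^2)) := by rw [hF]; simp

lemma st14_sum_h_le (hL : 1000 ≤ L) (D : ℕ) :
    ∑ j ∈ Finset.range (D+1), st14h L j ≤ 3 * L := by
  have hL0 : (0:ℝ) < L := by linarith
  set K := ⌊L⌋₊ + 1 with hK
  have hK2 : 2 ≤ K := by
    have : 1 ≤ ⌊L⌋₊ := Nat.le_floor (by exact_mod_cast (by linarith : (1:ℝ) ≤ L))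
    omega
  have hjK : ∀ j : ℕ, j < K ↔ (j:ℝ) ≤ L := by
    intro j
    rw [hK, Nat.lt_add_one_iff, Nat.le_floor_iff hL0.le]
  have hKL : L < (K:ℝ) := by
    rw [hK]; push_cast; exact Nat.lt_floor_add_one L
  set M' := max (D+1) K with hM'
  have hsum1 : ∑ j ∈ Finset.range (D+1), st14h L j ≤ ∑ j ∈ Finset.range M', st14h L j :=
    Finset.sum_le_sum_of_subset_of_nonneg
      (Finset.range_subset_range.2 (le_max_left _ _)) (fun j _ _ => st14h_nonneg hL0 j)
  have hsplit : ∑ j ∈ Finset.range M', st14h L j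
      = ∑ j ∈ Finset.range K, st14h L j + ∑ j ∈ Finset.Ico K M', st14h L j := by
    rw [Finset.range_eq_Ico, ← Finset.sum_Ico_consecutive _ (Nat.zero_le K) (le_max_right _ _),
      ← Finset.range_eq_Ico]
  have h1 : ∑ j ∈ Finset.range K, st14h L j ≤ L + 1 := by
    have he : ∀ j ∈ Finset.range K, st14h L j = 1 := fun j hj =>
      if_pos ((hjK j).1 (Finset.mem_range.1 hj))
    rw [Finset.sum_congr rfl he, Finset.sum_const, Finset.card_range, nsmul_eq_mul, mul_one]
    rw [hK]; push_cast
    have := Nat.floor_le hL0.le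
    linarith
  have h2 : ∑ j ∈ Finset.Ico K M', st14h L j ≤ L := by
    rw [Finset.sum_Ico_eq_sum_range]
    have he2 : ∀ i ∈ Finset.range (M'-K), st14h L (K+i) = (L/((K+i:ℕ):ℝ))^(3:ℕ) := by
      intro i _
      apply if_neg
      push_neg
      have : (K:ℝ) ≤ ((K+i:ℕ):ℝ) := by exact_mod_cast (by omega : K ≤ K+i)
      linarith
    rw [Finset.sum_congr rfl he2]
    refine (st14_tail_sum hL0 hK2 (M'-K)).trans ?_
    have hfl : L - 1 ≤ ((K-1:ℕ):ℝ) := by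
      have : K - 1 = ⌊L⌋₊ := by omega
      rw [this]
      have := Nat.floor_le hL0.le
      have := Nat.lt_floor_add_one L
      linarith
    have hfl0 : (0:ℝ) < ((K-1:ℕ):ℝ) := by linarith
    rw [mul_one_div, div_le_iff₀ (by positivity)]
    nlinarith [sq_nonneg (L-1), sq_nonneg (((K-1:ℕ):ℝ) - (L-1))]
  linarith [hsum1, hsplit.le, h1, h2, hL0]

end SumBound

section BlockBound

variable {Ω : Type*} [MeasurableSpace Ω] {μ : Measure Ω} [IsProbabilityMeasure μ]
variable {U : ℕ → Ω → ℝ} {ε L : ℝ}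

lemma st14_block_le (hmeas : ∀ k, Measurable (U k))
    (hindep : iIndepFun U μ)
    (hunif : ∀ k, μ.map (U k) = volume.restrict (Set.Icc (0 : ℝ) 1))
    (hε : 0 < ε) (hε' : ε < 1/4) (hL : 1000 ≤ L) (hεL : 1 ≤ ε*L)
    {D : ℕ} (hD : 1 ≤ D) :
    μ (st14BadBlock U ε L D) ≤ ENNReal.ofReal (72 * L * exp (-(2*L))) := by
  have hL1 : (1:ℝ) ≤ L := by linarith
  calc μ (st14BadBlock U ε L D)
      ≤ ∑ j ∈ Finset.range (D+1), μ (⋃ i ∈ Finset.range (st14I ε L D j + 1), st14Bad U ε L D j i) :=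
        measure_biUnion_finset_le _ _
    _ ≤ ∑ j ∈ Finset.range (D+1),
          ENNReal.ofReal (((st14I ε L D j + 1 : ℕ):ℝ) * (2 * exp (-(2 * st14E ε L j)))) := by
        apply Finset.sum_le_sum
        intro j hj
        have hjD : j ≤ D := Nat.lt_succ_iff.1 (Finset.mem_range.1 hj)
        calc μ (⋃ i ∈ Finset.range (st14I ε L D j + 1), st14Bad U ε L D j i)
            ≤ ∑ i ∈ Finset.range (st14I ε L D j + 1), μ (st14Bad U ε L D j i) :=
              measure_biUnion_finset_le _ _
          _ ≤ ∑ _i ∈ Finset.range (st14I ε L D j + 1),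
                ENNReal.ofReal (2 * exp (-(2 * st14E ε L j))) :=
              Finset.sum_le_sum fun i _ => st14_bad_le hmeas hindep hunif hε hε' hL1 hjD hD i
          _ = (st14I ε L D j + 1 : ℕ) • ENNReal.ofReal (2 * exp (-(2 * st14E ε L j))) := by
              rw [Finset.sum_const, Finset.card_range]
          _ = ENNReal.ofReal (((st14I ε L D j + 1 : ℕ):ℝ) * (2 * exp (-(2 * st14E ε L j)))) := by
              have hcast : ((st14I ε L D j + 1 : ℕ) : ENNReal)
                  = ENNReal.ofReal (((st14I ε L D j + 1 : ℕ) : ℝ)) :=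
                (ENNReal.ofReal_natCast _).symm
              rw [nsmul_eq_mul, hcast, ← ENNReal.ofReal_mul (by positivity)]
    _ = ENNReal.ofReal (∑ j ∈ Finset.range (D+1),
          ((st14I ε L D j + 1 : ℕ):ℝ) * (2 * exp (-(2 * st14E ε L j)))) := by
        rw [ENNReal.ofReal_sum_of_nonneg]
        intro j _
        positivity
    _ ≤ ENNReal.ofReal (72 * L * exp (-(2*L))) := by
        apply ENNReal.ofReal_le_ofReal
        calc ∑ j ∈ Finset.range (D+1), ((st14I ε L D j + 1 : ℕ):ℝ) * (2 * exp (-(2 * st14E ε L j)))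
            ≤ ∑ j ∈ Finset.range (D+1), 24 * exp (-(2*L)) * st14h L j :=
              Finset.sum_le_sum fun j _ => st14_term_le hε hε' hL hεL hD j
          _ = 24 * exp (-(2*L)) * ∑ j ∈ Finset.range (D+1), st14h L j := by
              rw [Finset.mul_sum]
          _ ≤ 24 * exp (-(2*L)) * (3*L) := by
              apply mul_le_mul_of_nonneg_left (st14_sum_h_le hL D) (by positivity)
          _ = 72 * L * exp (-(2*L)) := by ring

end BlockBound

section Core

variable {Ω : Type*} {U : ℕ → Ω → ℝ} {ε L : ℝ}

lemma st14_rt (a b c : ℝ) (ha : 0 ≤ a) (hab : a^(4:ℕ) ≤ b^(3:ℕ)) (hb : 0 ≤ b) :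
    a ≤ b ^ ((3:ℝ)/4) := by
  calc a = (a^(4:ℕ)) ^ ((1:ℝ)/4) := by
        rw [← rpow_natCast a 4, ← rpow_mul ha]; norm_num
    _ ≤ (b^(3:ℕ)) ^ ((1:ℝ)/4) := by
        apply rpow_le_rpow (by positivity) hab (by norm_num)
    _ = b ^ ((3:ℝ)/4) := by
        rw [← rpow_natCast b 3, ← rpow_mul hb]; norm_num

lemma st14_const_lb : (0.46:ℝ) ≤ (5/14) ^ ((3:ℝ)/4) := by
  apply st14_rt _ _ 0 (by norm_num) (by norm_num) (by norm_num)

lemma st14_core (hε : 0 < ε) (hε' : ε < 1/4) (hL : 1000 ≤ L)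
    {D n : ℕ} (hn1 : 1 ≤ n) (hnD : n ≤ D) (hDn : (D:ℝ) ≤ (14/5) * n)
    {t : ℝ} (ht0 : 0 ≤ t) (ht1 : t < 1) (ω : Ω)
    (good : ∀ j ≤ D, ∀ i ≤ st14I ε L D j,
      |st14S U ((j:ℝ)/(D:ℝ)) (st14node ε L D j i) ω
        - ((j:ℝ)/(D:ℝ)) * (st14node ε L D j i)| < (17/5) * st14tau ε L j) :
    |t * n - st14S U t n ω| < 8 * (max (t*n) L) ^ (1/2+ε) * L ^ (1/2-ε) := by
  have hL0 : (0:ℝ) < L := by linarith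
  have hD1 : 1 ≤ D := hn1.trans hnD
  have hD0 : (0:ℝ) < (D:ℝ) := by exact_mod_cast hD1
  have hn0 : (0:ℝ) < (n:ℝ) := by exact_mod_cast hn1
  have hnDr : (n:ℝ) ≤ (D:ℝ) := by exact_mod_cast hnD
  set j := ⌊t * D⌋₊ with hjdef
  have hj1 : (j:ℝ) ≤ t*D := Nat.floor_le (by positivity)
  have hj2 : t*(D:ℝ) < (j:ℝ)+1 := Nat.lt_floor_add_one _
  have hjD : j < D := by
    have : (j:ℝ) < (D:ℝ) := by nlinarith
    exact_mod_cast this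
  have hj1D : j+1 ≤ D := hjD
  set jr := (j:ℝ) with hjr
  set q0 := jr/(D:ℝ) with hq0def
  set q1 := (jr+1)/(D:ℝ) with hq1def
  have htj : q0 ≤ t := by rw [hq0def, div_le_iff₀ hD0]; exact hj1
  have htj1 : t ≤ q1 := by rw [hq1def, le_div_iff₀ hD0]; linarith
  have hq10 : 0 ≤ q1 := le_trans ht0 htj1
  have hq11 : q1 ≤ 1 := by
    rw [hq1def, div_le_one hD0]
    have : ((j+1:ℕ):ℝ) ≤ (D:ℝ) := by exact_mod_cast hj1D
    push_cast at this; linarith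
  have hq1t : q1 - t ≤ 1/(D:ℝ) := by
    have h' : q1 - q0 = 1/(D:ℝ) := by
      rw [hq1def, hq0def, div_sub_div_same]; congr 1; ring
    linarith
  have htq0 : t - q0 ≤ 1/(D:ℝ) := by
    have h' : q1 - q0 = 1/(D:ℝ) := by
      rw [hq1def, hq0def, div_sub_div_same]; congr 1; ring
    linarith
  set t1 := st14tau ε L (j+1) with ht1def
  set t0 := st14tau ε L j with ht0def
  have ht0pos : 0 < t0 := st14tau_pos hL0 j
  have ht1pos : 0 < t1 := st14tau_pos hL0 (j+1)
  have ht01 : t0 ≤ t1 := st14tau_mono hε hL0 (Nat.le_succ j)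
  have hLt0 : L ≤ t0 := st14_L_le_tau hε hε' (by linarith) j
  -- upper bound
  set Dl' := st14Del ε L D (j+1) with hDl'def
  have hDl'0 : 0 < Dl' := Nat.succ_le_succ (Nat.zero_le _)
  set iU := n / Dl' + 1 with hiUdef
  set nU := st14node ε L D (j+1) iU with hnUdef
  have hiU : iU ≤ st14I ε L D (j+1) := by
    rw [hiUdef, st14I]
    exact Nat.succ_le_succ (Nat.div_le_div_right hnD)
  have hnnU : n ≤ nU := by
    rw [hnUdef, st14node]
    refine le_min ?_ hnD
    have h1 : n < (n / Dl' + 1) * Dl' := (Nat.div_lt_iff_lt_mul hDl'0).1 (Nat.lt_succ_self _)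
    exact h1.le
  have hnUD : nU ≤ D := min_le_right _ _
  have hnUn : (nU:ℝ) ≤ (n:ℝ) + (Dl':ℝ) := by
    have h1 : nU ≤ iU * Dl' := min_le_left _ _
    have h2 : iU * Dl' = (n/Dl')*Dl' + Dl' := by rw [hiUdef]; ring
    have h3 : (n/Dl')*Dl' ≤ n := Nat.div_mul_le_self _ _
    have : nU ≤ n + Dl' := by omega
    exact_mod_cast this
  have hDl'le : (Dl':ℝ) ≤ (D:ℝ) * t1 / (5*((jr+1)+1)) + 1 := by
    rw [hDl'def, st14Del]
    push_cast
    have := Nat.floor_le (a := (D:ℝ) * st14tau ε L (j+1) / (5*(((j:ℕ):ℝ)+1+1)))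
      (by positivity)
    rw [← ht1def] at this
    linarith
  have hq1D : q1 * (D:ℝ) = jr + 1 := by
    rw [hq1def]; field_simp
  have hA5 : q1 * (Dl':ℝ) ≤ t1/5 + 1 := by
    have h1 : q1 * (Dl':ℝ) ≤ q1 * ((D:ℝ) * t1 / (5*((jr+1)+1)) + 1) :=
      mul_le_mul_of_nonneg_left hDl'le hq10
    have hDne : (D:ℝ) ≠ 0 := ne_of_gt hD0
    have h2 : q1 * ((D:ℝ) * t1 / (5*((jr+1)+1)) + 1)
        = (jr+1) * t1 / (5*((jr+1)+1)) + q1 := by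
      rw [hq1def]
      field_simp
    have h3 : (jr+1) * t1 / (5*((jr+1)+1)) ≤ t1/5 := by
      rw [div_le_div_iff₀ (by positivity) (by norm_num)]
      have hjr0 : (0:ℝ) ≤ jr := Nat.cast_nonneg j
      nlinarith
    linarith
  -- the good event at (j+1, iU)
  have hgU := good (j+1) hj1D iU hiU
  have hcastq1 : (((j+1:ℕ)):ℝ)/(D:ℝ) = q1 := by push_cast; rw [hq1def]
  rw [hcastq1] at hgU
  have hgU' := abs_lt.1 hgU
  rw [← hnUdef] at hgU'
  -- S t n ≤ S q1 nU
  have hA1 : st14S U t n ω ≤ st14S U q1 nU ω := st14S_mono htj1 hnnU ω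
  have hupper : st14S U t n ω - t*(n:ℝ) < (17/5)*t1 + (t1/5 + 2) := by
    have e1 : st14S U q1 nU ω - q1*(nU:ℝ) < (17/5)*t1 := by
      have h := hgU'.2
      have h2 := ht1def
      linarith
    have e2 : q1*(nU:ℝ) - t*(n:ℝ) ≤ 1 + (t1/5 + 1) := by
      have f1 : q1*(nU:ℝ) - t*(n:ℝ) = q1*((nU:ℝ) - (n:ℝ)) + (q1 - t)*(n:ℝ) := by ring
      have f2 : q1*((nU:ℝ) - (n:ℝ)) ≤ q1 * (Dl':ℝ) := by
        apply mul_le_mul_of_nonneg_left _ hq10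
        linarith
      have f3 : (q1 - t)*(n:ℝ) ≤ (1/(D:ℝ))*(n:ℝ) := by
        apply mul_le_mul_of_nonneg_right hq1t hn0.le
      have f4 : (1/(D:ℝ))*(n:ℝ) ≤ 1 := by
        rw [div_mul_eq_mul_div, div_le_one hD0]; linarith
      linarith
    linarith
  -- lower bound
  set Dl := st14Del ε L D j with hDldef
  have hDl0 : 0 < Dl := Nat.succ_le_succ (Nat.zero_le _)
  set iL := n / Dl with hiLdef
  set nL := st14node ε L D j iL with hnLdef
  have hiL : iL ≤ st14I ε L D j := by
    rw [hiLdef, st14I]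
    exact le_trans (Nat.div_le_div_right hnD) (Nat.le_succ _)
  have hnLeq : nL = iL * Dl := by
    rw [hnLdef, st14node, min_eq_left]
    calc iL * Dl = (n/Dl)*Dl := by rw [hiLdef]
      _ ≤ n := Nat.div_mul_le_self _ _
      _ ≤ D := hnD
  have hnLn : nL ≤ n := by
    rw [hnLeq, hiLdef]; exact Nat.div_mul_le_self _ _
  have hnnL : (n:ℝ) ≤ (nL:ℝ) + (Dl:ℝ) := by
    have h1 : n < (n/Dl)*Dl + Dl := by
      calc n < (n/Dl + 1) * Dl := (Nat.div_lt_iff_lt_mul hDl0).1 (Nat.lt_succ_self _)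
        _ = (n/Dl)*Dl + Dl := by ring
    have h2 : n ≤ nL + Dl := by rw [hnLeq, hiLdef]; exact h1.le
    exact_mod_cast h2
  have hDlle : (Dl:ℝ) ≤ (D:ℝ) * t0 / (5*(jr+1)) + 1 := by
    rw [hDldef, st14Del]
    push_cast
    have := Nat.floor_le (a := (D:ℝ) * st14tau ε L j / (5*(((j:ℕ):ℝ)+1)))
      (by positivity)
    rw [← ht0def] at this
    linarith
  have hA5' : q1 * (Dl:ℝ) ≤ t0/5 + 1 := by
    have h1 : q1 * (Dl:ℝ) ≤ q1 * ((D:ℝ) * t0 / (5*(jr+1)) + 1) :=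
      mul_le_mul_of_nonneg_left hDlle hq10
    have hDne : (D:ℝ) ≠ 0 := ne_of_gt hD0
    have h2 : q1 * ((D:ℝ) * t0 / (5*(jr+1)) + 1)
        = (jr+1) * t0 / (5*(jr+1)) + q1 := by
      have hjr1 : jr + 1 ≠ 0 := ne_of_gt (by have := Nat.cast_nonneg (α := ℝ) j; linarith)
      rw [hq1def]
      field_simp
    have h3 : (jr+1) * t0 / (5*(jr+1)) ≤ t0/5 := by
      rw [div_le_div_iff₀ (by positivity) (by norm_num)]
      have hjr0 : (0:ℝ) ≤ jr := Nat.cast_nonneg j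
      nlinarith
    linarith
  have hgL := good j (le_of_lt hjD) iL hiL
  have hgL' := abs_lt.1 hgL
  have hA1' : st14S U q0 nL ω ≤ st14S U t n ω := st14S_mono htj hnLn ω
  have hlower : t*(n:ℝ) - st14S U t n ω < (17/5)*t0 + (t0/5 + 2) := by
    rw [← hnLdef] at hgL'
    have e1 : q0*(nL:ℝ) - st14S U q0 nL ω < (17/5)*t0 := by
      have h := hgL'.1
      have h2 := ht0def
      linarith
    have e2 : t*(n:ℝ) - q0*(nL:ℝ) ≤ t0/5 + 2 := by
      have f1 : t*(n:ℝ) - q0*(nL:ℝ) = t*((n:ℝ) - (nL:ℝ)) + (t - q0)*(nL:ℝ) := by ring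
      have f2 : t*((n:ℝ) - (nL:ℝ)) ≤ q1 * (Dl:ℝ) := by
        apply mul_le_mul _ _ _ hq10
        · exact htj1
        · linarith
        · have : (nL:ℝ) ≤ (n:ℝ) := by exact_mod_cast hnLn
          linarith
      have f3 : (t - q0)*(nL:ℝ) ≤ (1/(D:ℝ))*(D:ℝ) := by
        apply mul_le_mul htq0 _ (Nat.cast_nonneg nL) (by positivity)
        exact_mod_cast le_trans hnLn hnD
      have f4 : (1/(D:ℝ))*(D:ℝ) = 1 := by field_simp
      linarith
    linarith [e1, e2, hA1']
  -- combine into two-sided bound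
  have habs : |t*(n:ℝ) - st14S U t n ω| < (17/5)*t1 + t1/5 + 2 := by
    rw [abs_sub_lt_iff]
    constructor
    · linarith
    · linarith
  -- step 1 : t1 ≤ (1+1/L) * t0
  have hM0pos := st14M_pos (L := L) hL0 j
  have hstep1 : t1 ≤ (1+1/L) * t0 := by
    have hM1 : st14M L (j+1) ≤ st14M L j * (1+1/L) := by
      have h1 : st14M L (j+1) ≤ st14M L j + 1 := by
        rw [st14M, st14M]
        push_cast
        apply max_le
        · have := le_max_left (jr) L; linarith [le_max_left jr L]
        · linarith [le_max_right jr L]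
      have h2 : 1 ≤ st14M L j / L := by
        rw [le_div_iff₀ hL0, one_mul]; exact st14M_ge j
      have h3 : st14M L j * (1+1/L) = st14M L j + st14M L j / L := by ring
      rw [h3]
      linarith
    have h4 : st14M L (j+1) ^ (1/2+ε) ≤ (st14M L j * (1+1/L)) ^ (1/2+ε) :=
      rpow_le_rpow (st14M_pos hL0 (j+1)).le hM1 (by linarith)
    have h5 : (st14M L j * (1+1/L)) ^ (1/2+ε)
        = st14M L j ^ (1/2+ε) * (1+1/L) ^ (1/2+ε) :=
      mul_rpow hM0pos.le (by positivity)
    have h6 : (1+1/L) ^ (1/2+ε) ≤ (1+1/L) := by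
      nth_rewrite 2 [show (1+1/L) = (1+1/L) ^ (1:ℝ) by rw [rpow_one]]
      have h0 : (0:ℝ) ≤ 1/L := by positivity
      apply rpow_le_rpow_of_exponent_le (by linarith) (by linarith)
    calc t1 = st14M L (j+1) ^ (1/2+ε) * L ^ (1/2-ε) := by rw [ht1def, st14tau]
      _ ≤ st14M L j ^ (1/2+ε) * (1+1/L) * L ^ (1/2-ε) := by
          have := (rpow_pos_of_pos hL0 (1/2-ε)).le
          apply mul_le_mul_of_nonneg_right _ this
          calc st14M L (j+1) ^ (1/2+ε) ≤ (st14M L j * (1+1/L)) ^ (1/2+ε) := h4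
            _ = st14M L j ^ (1/2+ε) * (1+1/L) ^ (1/2+ε) := h5
            _ ≤ st14M L j ^ (1/2+ε) * (1+1/L) := by
                apply mul_le_mul_of_nonneg_left h6 (rpow_pos_of_pos hM0pos _).le
      _ = (1+1/L) * t0 := by rw [ht0def, st14tau]; ring
  -- step 2 : 3.68 * t0 ≤ c
  have hstep2 : 3.68 * t0 ≤ 8 * (max (t*(n:ℝ)) L) ^ (1/2+ε) * L ^ (1/2-ε) := by
    have hnD514 : (5/14:ℝ) ≤ (n:ℝ)/(D:ℝ) := by
      rw [le_div_iff₀ hD0]; linarith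
    have htn : (5/14)*jr ≤ t*(n:ℝ) := by
      have g1 : q0*(n:ℝ) ≤ t*(n:ℝ) := mul_le_mul_of_nonneg_right htj hn0.le
      have g2 : q0*(n:ℝ) = jr*((n:ℝ)/(D:ℝ)) := by rw [hq0def]; ring
      have g3 : jr*(5/14) ≤ jr*((n:ℝ)/(D:ℝ)) :=
        mul_le_mul_of_nonneg_left hnD514 (Nat.cast_nonneg j)
      linarith
    have hmax : (5/14)*st14M L j ≤ max (t*(n:ℝ)) L := by
      rw [st14M]
      rcases max_cases (jr) L with ⟨h1, h2⟩ | ⟨h1, h2⟩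
      · rw [h1]
        exact le_trans htn (le_max_left _ _)
      · rw [h1]
        have : (5/14:ℝ)*L ≤ L := by linarith
        exact le_trans this (le_max_right _ _)
    have hrp : ((5/14)*st14M L j) ^ (1/2+ε) ≤ (max (t*(n:ℝ)) L) ^ (1/2+ε) :=
      rpow_le_rpow (by positivity) hmax (by linarith)
    have heq : ((5/14)*st14M L j) ^ (1/2+ε)
        = (5/14:ℝ) ^ ((1:ℝ)/2+ε) * st14M L j ^ (1/2+ε) :=
      mul_rpow (by norm_num) hM0pos.le
    have hc1 : (0.46:ℝ) ≤ (5/14:ℝ) ^ ((1:ℝ)/2+ε) := by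
      refine le_trans st14_const_lb ?_
      apply rpow_le_rpow_of_exponent_ge (by norm_num) (by norm_num)
      linarith
    have hMrp := (rpow_pos_of_pos hM0pos (1/2+ε)).le
    have hfinal : 0.46 * st14M L j ^ (1/2+ε) ≤ (max (t*(n:ℝ)) L) ^ (1/2+ε) := by
      refine le_trans ?_ hrp
      rw [heq]
      exact mul_le_mul_of_nonneg_right hc1 hMrp
    have hLrp := (rpow_pos_of_pos hL0 (1/2-ε)).le
    calc 3.68 * t0 = 8 * (0.46 * st14M L j ^ (1/2+ε)) * L ^ (1/2-ε) := by
          rw [ht0def, st14tau]; ring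
      _ ≤ 8 * (max (t*(n:ℝ)) L) ^ (1/2+ε) * L ^ (1/2-ε) := by
          apply mul_le_mul_of_nonneg_right _ hLrp
          linarith [hfinal]
  -- step 3 : numeric
  have hLinv : 1/L ≤ 1/1000 := by
    rw [div_le_div_iff₀ hL0 (by norm_num)]; linarith
  have ht0L : 1000 ≤ t0 := le_trans hL hLt0
  have : (17/5)*t1 + t1/5 + 2 ≤ 3.68 * t0 := by
    have h1 : t1 ≤ t0 + t0/1000 := by
      have h5 : (1+1/L)*t0 ≤ (1+1/1000)*t0 :=
        mul_le_mul_of_nonneg_right (by linarith) ht0pos.le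
      have h2 : (1+1/1000)*t0 = t0 + t0/1000 := by ring
      linarith
    linarith
  calc |t*(n:ℝ) - st14S U t n ω| < (17/5)*t1 + t1/5 + 2 := habs
    _ ≤ 3.68 * t0 := this
    _ ≤ 8 * (max (t*(n:ℝ)) L) ^ (1/2+ε) * L ^ (1/2-ε) := hstep2

end Core

section Main

/-- Almost-sure fluctuation bound for the coupled triangular array
`A_{n,k} = 1_{{U_k ≤ p_n}}` built from an i.i.d. sequence of uniform `[0,1]` random
variables (coordinate projections of the infinite product space), with deviation
scale `c(k,n) = 8 (max {k, log ψ ⌊log n⌋})^{1/2+ε} (log ψ ⌊log n⌋)^{1/2-ε}`. -/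
theorem stmt_14
    {Ω : Type*} [MeasurableSpace Ω] (μ : Measure Ω) [IsProbabilityMeasure μ]
    (U : ℕ → Ω → ℝ) (hmeas : ∀ k, Measurable (U k))
    (hindep : iIndepFun U μ)
    (hunif : ∀ k, μ.map (U k) = volume.restrict (Set.Icc (0 : ℝ) 1))
    (p : ℕ → ℝ) (hp : ∀ n, p n ∈ Set.Icc (0 : ℝ) 1)
    (ε : ℝ) (hε : 0 < ε) (hε' : ε < 1 / 4)
    (ψ : ℕ → ℝ) (hψpos : ∀ n, 0 < ψ n) (hψ : Summable fun n => 1 / ψ n)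
    (c : ℝ → ℕ → ℝ)
    (hc : ∀ (k : ℝ) (n : ℕ), c k n =
      8 * max k (Real.log (ψ ⌊Real.log n⌋₊)) ^ (1 / 2 + ε)
        * Real.log (ψ ⌊Real.log n⌋₊) ^ (1 / 2 - ε)) :
    ∀ᵐ ω ∂μ, ∀ᶠ n : ℕ in atTop,
      |p n * n - ∑ k ∈ Finset.range n, (if U k ω ≤ p n then (1 : ℝ) else 0)|
        < c (p n * n) n := by
  classical
  set Lb : ℝ := max 1000 (1/ε) with hLbdef
  -- ψ tends to infinity
  have hψtop : Tendsto ψ atTop atTop := by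
    rw [tendsto_atTop]
    intro C
    have h0 : Tendsto (fun n => 1/ψ n) atTop (nhds 0) := hψ.tendsto_atTop_zero
    have hMC : (0:ℝ) < max C 1 := lt_of_lt_of_le one_pos (le_max_right _ _)
    have h1 : ∀ᶠ n in atTop, 1/ψ n < 1/(max C 1) :=
      h0.eventually_lt_const (by positivity)
    filter_upwards [h1] with n hn
    have hψn := hψpos n
    rw [div_lt_div_iff₀ hψn hMC] at hn
    have h2 : max C 1 < ψ n := by linarith
    linarith [le_max_left C 1]
  obtain ⟨m₀, hm₀⟩ := eventually_atTop.1 (hψtop.eventually_ge_atTop (exp Lb))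
  have hLbm : ∀ m, m₀ ≤ m → Lb ≤ Real.log (ψ m) := by
    intro m hm
    have h1 := hm₀ m hm
    calc Lb = Real.log (exp Lb) := (log_exp Lb).symm
      _ ≤ Real.log (ψ m) := Real.log_le_log (exp_pos _) h1
  set Dm : ℕ → ℕ := fun m => ⌈exp ((m:ℝ)+1)⌉₊ with hDmdef
  set s : ℕ → Set Ω := fun k => st14BadBlock U ε (Real.log (ψ (k+m₀))) (Dm (k+m₀)) with hsdef
  have hLfacts : ∀ m, m₀ ≤ m → 1000 ≤ Real.log (ψ m) ∧ 1 ≤ ε * Real.log (ψ m) := by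
    intro m hm
    have h1 := hLbm m hm
    have h2 : (1000:ℝ) ≤ Lb := le_max_left _ _
    have h3 : 1/ε ≤ Lb := le_max_right _ _
    constructor
    · linarith
    · calc (1:ℝ) = ε * (1/ε) := by field_simp
        _ ≤ ε * Real.log (ψ m) := mul_le_mul_of_nonneg_left (by linarith) hε.le
  have hsbound : ∀ k, μ (s k) ≤ ENNReal.ofReal (72 / ψ (k+m₀)) := by
    intro k
    set m := k + m₀ with hmdef
    set L := Real.log (ψ m) with hLdef
    obtain ⟨hL1000, hεL⟩ := hLfacts m (Nat.le_add_left _ _)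
    have hD1 : 1 ≤ Dm m := Nat.one_le_ceil_iff.2 (exp_pos _)
    refine (st14_block_le hmeas hindep hunif hε hε' hL1000 hεL hD1).trans
      (ENNReal.ofReal_le_ofReal ?_)
    have hψm := hψpos m
    have hL0 : (0:ℝ) < L := by linarith
    have hexpL : exp L = ψ m := exp_log hψm
    have he : exp (-(2*L)) = (ψ m)⁻¹ * (ψ m)⁻¹ := by
      rw [show -(2*L) = (-L) + (-L) by ring, exp_add, exp_neg, hexpL]
    have hLψ : L ≤ ψ m := by
      have := Real.log_le_sub_one_of_pos hψm
      linarith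
    rw [he, div_eq_mul_inv]
    have hinv : (0:ℝ) < (ψ m)⁻¹ := by positivity
    calc 72 * L * ((ψ m)⁻¹ * (ψ m)⁻¹) = 72 * (L * (ψ m)⁻¹) * (ψ m)⁻¹ := by ring
      _ ≤ 72 * 1 * (ψ m)⁻¹ := by
          have : L * (ψ m)⁻¹ ≤ 1 := by
            rw [← exp_log hψm]
            calc L * (exp L)⁻¹ ≤ exp L * (exp L)⁻¹ := by
                  apply mul_le_mul_of_nonneg_right _ (by positivity)
                  linarith [Real.add_one_le_exp L]
              _ = 1 := by field_simp
          nlinarith [this, hinv]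
      _ = 72 * (ψ m)⁻¹ := by ring
  have htsum : (∑' k, μ (s k)) ≠ ⊤ := by
    have hsummable : Summable (fun k => 72 / ψ (k+m₀)) := by
      have h1 : Summable (fun k => 1 / ψ (k+m₀)) := (summable_nat_add_iff m₀).2 hψ
      have h2 := h1.mul_left 72
      refine h2.congr (fun k => ?_)
      ring
    have h3 : (∑' k, μ (s k)) ≤ ∑' k, ENNReal.ofReal (72 / ψ (k+m₀)) :=
      ENNReal.tsum_le_tsum hsbound
    have h4 : (∑' k, ENNReal.ofReal (72 / ψ (k+m₀)))
        = ENNReal.ofReal (∑' k, 72 / ψ (k+m₀)) :=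
      (ENNReal.ofReal_tsum_of_nonneg (fun k => le_of_lt (div_pos (by norm_num) (hψpos _))) hsummable).symm
    rw [h4] at h3
    exact ne_top_of_le_ne_top ENNReal.ofReal_ne_top h3
  have hae1 := MeasureTheory.ae_eventually_notMem htsum
  have hU1ae : ∀ᵐ ω ∂μ, ∀ k, U k ω ≤ 1 := by
    rw [ae_all_iff]
    intro k
    have hnull : μ {ω | 1 < U k ω} = 0 := by
      have h1 : {ω | 1 < U k ω} = U k ⁻¹' Set.Ioi 1 := rfl
      rw [h1, ← Measure.map_apply (hmeas k) measurableSet_Ioi, hunif k,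
        Measure.restrict_apply measurableSet_Ioi]
      have h2 : Set.Ioi (1:ℝ) ∩ Set.Icc 0 1 = ∅ := by
        ext x
        simp only [Set.mem_inter_iff, Set.mem_Ioi, Set.mem_Icc, Set.mem_empty_iff_false,
          iff_false, not_and]
        intro h1x h2x
        linarith [h2x]
      rw [h2, measure_empty]
    rw [ae_iff]
    have h3 : {ω | ¬ U k ω ≤ 1} = {ω | 1 < U k ω} := by ext ω; simp [not_le]
    rw [h3]; exact hnull
  filter_upwards [hae1, hU1ae] with ω hgood hU1
  obtain ⟨K, hK⟩ := eventually_atTop.1 hgood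
  have hmtend : Tendsto (fun n : ℕ => ⌊Real.log (n:ℝ)⌋₊) atTop atTop :=
    tendsto_nat_floor_atTop.comp (Real.tendsto_log_atTop.comp tendsto_natCast_atTop_atTop)
  have hev1 : ∀ᶠ n : ℕ in atTop, K + m₀ ≤ ⌊Real.log (n:ℝ)⌋₊ := hmtend.eventually_ge_atTop _
  filter_upwards [hev1, eventually_ge_atTop 13] with n hmK hn13
  set m := ⌊Real.log (n:ℝ)⌋₊ with hm2def
  set L := Real.log (ψ m) with hL2def
  have hmm₀ : m₀ ≤ m := by omega
  have hωgood : ω ∉ st14BadBlock U ε L (Dm m) := by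
    have h1 := hK (m - m₀) (by omega)
    have h2 : (m - m₀) + m₀ = m := Nat.sub_add_cancel hmm₀
    rw [hsdef] at h1
    simpa [h2] using h1
  obtain ⟨hL1000, hεL⟩ := hLfacts m hmm₀
  have hL0 : (0:ℝ) < L := by linarith
  have hn1 : 1 ≤ n := by omega
  have hn0 : (0:ℝ) < (n:ℝ) := by exact_mod_cast hn1
  have hlogn0 : 0 ≤ Real.log (n:ℝ) := log_nonneg (by exact_mod_cast hn1)
  have hfl : (m:ℝ) ≤ Real.log (n:ℝ) := Nat.floor_le hlogn0
  have hfl2 : Real.log (n:ℝ) < (m:ℝ)+1 := Nat.lt_floor_add_one _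
  have hexpm : exp (m:ℝ) ≤ (n:ℝ) := by
    rw [← exp_log hn0]; exact exp_le_exp.2 hfl
  have hnD : n ≤ Dm m := by
    have h1 : (n:ℝ) < exp ((m:ℝ)+1) := by
      rw [← exp_log hn0]; exact exp_lt_exp.2 hfl2
    have h2 : exp ((m:ℝ)+1) ≤ ((Dm m : ℕ) : ℝ) := Nat.le_ceil _
    have h3 : (n:ℝ) < ((Dm m : ℕ) : ℝ) := lt_of_lt_of_le h1 h2
    exact_mod_cast h3.le
  have hD28 : ((Dm m : ℕ) : ℝ) ≤ (14/5) * n := by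
    have h1 : ((Dm m : ℕ) : ℝ) < exp ((m:ℝ)+1) + 1 := Nat.ceil_lt_add_one (exp_pos _).le
    have h2 : exp ((m:ℝ)+1) = exp (m:ℝ) * exp 1 := by rw [← exp_add]
    have h3 : exp 1 < 2.7182818286 := exp_one_lt_d9
    have h4 : exp ((m:ℝ)+1) ≤ (n:ℝ) * 2.7182818286 := by
      rw [h2]
      exact mul_le_mul hexpm h3.le (exp_pos 1).le hn0.le
    have hn13' : (13:ℝ) ≤ (n:ℝ) := by exact_mod_cast hn13
    nlinarith
  have hgood2 : ∀ j ≤ Dm m, ∀ i ≤ st14I ε L (Dm m) j,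
      |st14S U ((j:ℝ)/((Dm m : ℕ):ℝ)) (st14node ε L (Dm m) j i) ω
        - ((j:ℝ)/((Dm m : ℕ):ℝ)) * (st14node ε L (Dm m) j i)| < (17/5) * st14tau ε L j := by
    intro j hj i hi
    by_contra hcon
    push_neg at hcon
    apply hωgood
    rw [st14BadBlock]
    simp only [Set.mem_iUnion]
    exact ⟨j, Finset.mem_range.2 (Nat.lt_succ_of_le hj), i,
      Finset.mem_range.2 (Nat.lt_succ_of_le hi), hcon⟩
  rcases eq_or_lt_of_le (hp n).2 with heq | hlt
  · -- p n = 1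
    have hsum : ∑ k ∈ Finset.range n, (if U k ω ≤ p n then (1:ℝ) else 0) = n := by
      rw [Finset.sum_congr rfl (fun k _ => if_pos (by rw [heq]; exact hU1 k))]
      simp
    rw [hsum, hc]
    have h0 : p n * (n:ℝ) - (n:ℝ) = 0 := by rw [heq]; ring
    rw [h0, abs_zero]
    exact mul_pos (mul_pos (by norm_num : (0:ℝ) < 8)
      (rpow_pos_of_pos (lt_max_of_lt_right hL0) _)) (rpow_pos_of_pos hL0 _)
  · have hcore := st14_core (U := U) hε hε' hL1000 hn1 hnD hD28 (hp n).1 hlt ω hgood2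
    rw [hc]
    simp only [st14S] at hcore
    exact hcore

end Main
end
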